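/- arXiv:1812.00274 — 4 statements merged into one kernel-verified Lean document; each statement's English description precedes it below -/
import Mathlib

section
/- For every n ≥ 2, the sequences (γ_r(G_n))_{r ∈ ℕ} and (ν_r(G_n))_{r ∈ ℕ} are nonincreasing and both converge to the kissing number κ_n as r → ∞. -/
noncomputable section

open Filter Topology RealInnerProductSpace

/-- The unit sphere `S^{n-1}` in `ℝ^n`. -/
abbrev Sphere (n : ℕ) : Set (EuclideanSpace ℝ (Fin n)) :=
  Metric.sphere (0 : EuclideanSpace ℝ (Fin n)) 1

/-- The `r`-stack of a `d`-tensor `T`: `Stk^r(T)(u, w) = T(u)`. -/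
def stk {α : Type*} (d r : ℕ) (T : (Fin d → α) → ℝ) : (Fin (d + r) → α) → ℝ :=
  fun v => T fun i => v (Fin.castAdd r i)

/-- The symmetrization of a `d`-tensor:
`σ(T)(v) = (1/d!) ∑_{π ∈ Sym(d)} T(v ∘ π)`. -/
def tsym {α : Type*} (d : ℕ) (T : (Fin d → α) → ℝ) : (Fin d → α) → ℝ :=
  fun v => (d.factorial : ℝ)⁻¹ * ∑ π : Equiv.Perm (Fin d), T (v ∘ π)

/-- A symmetric two-variable function identified with a `2`-tensor. -/
def kerTensor {X : Type*} (K : X → X → ℝ) : (Fin 2 → X) → ℝ :=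
  fun v => K (v 0) (v 1)

/-- A kernel: a continuous symmetric real-valued function of two variables. -/
def IsKernel {X : Type*} [TopologicalSpace X] (K : X → X → ℝ) : Prop :=
  Continuous (fun p : X × X => K p.1 p.2) ∧ ∀ x y, K x y = K y x

/-- Positive semidefiniteness of a two-variable function. -/
def IsPSDKernel {X : Type*} (K : X → X → ℝ) : Prop :=
  ∀ (k : ℕ) (v : Fin k → X) (x : Fin k → ℝ),
    0 ≤ ∑ i, ∑ j, K (v i) (v j) * x i * x j

/-- Copositivity of a two-variable function. -/
def IsCopositiveKernel {X : Type*} (K : X → X → ℝ) : Prop :=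
  ∀ (k : ℕ) (v : Fin k → X) (x : Fin k → ℝ), (∀ i, 0 ≤ x i) →
    0 ≤ ∑ i, ∑ j, K (v i) (v j) * x i * x j

/-- An `(r+2)`-tensor `S` is 2-PSD if it is continuous and every slice
`(x, y) ↦ S(x, y, z)` is a PSD kernel. -/
def Is2PSD {X : Type*} [TopologicalSpace X] (r : ℕ)
    (S : (Fin (2 + r) → X) → ℝ) : Prop :=
  Continuous S ∧ ∀ z : Fin r → X, IsPSDKernel fun x y => S (Fin.append ![x, y] z)

/-- Membership in `C_r`: a kernel `M` with `σ(Stk^r M) = σ(N)` for some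
nonnegative `(r+2)`-tensor `N`. -/
def memCr {X : Type*} [TopologicalSpace X] (r : ℕ) (M : X → X → ℝ) : Prop :=
  IsKernel M ∧ ∃ N : (Fin (2 + r) → X) → ℝ, (∀ v, 0 ≤ N v) ∧
    tsym (2 + r) (stk 2 r (kerTensor M)) = tsym (2 + r) N

/-- Membership in `Q_r`: a kernel `M` with `σ(Stk^r M) = σ(N) + σ(S)` for some
nonnegative `(r+2)`-tensor `N` and 2-PSD `(r+2)`-tensor `S`. -/
def memQr {X : Type*} [TopologicalSpace X] (r : ℕ) (M : X → X → ℝ) : Prop :=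
  IsKernel M ∧ ∃ N S : (Fin (2 + r) → X) → ℝ, (∀ v, 0 ≤ N v) ∧ Is2PSD r S ∧
    tsym (2 + r) (stk 2 r (kerTensor M)) =
      fun v => tsym (2 + r) N v + tsym (2 + r) S v

/-- The kissing number `κ_n = α(G_n)`: the maximum cardinality of a finite set
of points on `S^{n-1}` with pairwise inner products at most `1/2`. -/
def kissingNumber (n : ℕ) : ℕ :=
  sSup {k : ℕ | ∃ X : Finset ↥(Sphere n),
    (∀ u ∈ X, ∀ v ∈ X, u ≠ v →
      ⟪(u : EuclideanSpace ℝ (Fin n)), (v : EuclideanSpace ℝ (Fin n))⟫ ≤ 1 / 2) ∧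
    X.card = k}

/-- `γ_r(G_n) ∈ ℝ ∪ {+∞}`: the infimum of `λ ∈ ℝ` over pairs `(K, λ)` with
`K ∈ C_r^{S^{n-1}}`, `K(v,v) = λ - 1` for all `v`, and `K(u,v) = -1` whenever
`⟪u,v⟫ ≤ 1/2`. -/
def gammaSph (n r : ℕ) : EReal :=
  sInf {x : EReal | ∃ l : ℝ, x = (l : EReal) ∧
    ∃ K : ↥(Sphere n) → ↥(Sphere n) → ℝ, memCr r K ∧
      (∀ v, K v v = l - 1) ∧
      ∀ u v : ↥(Sphere n),
        ⟪(u : EuclideanSpace ℝ (Fin n)), (v : EuclideanSpace ℝ (Fin n))⟫ ≤ 1 / 2 →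
        K u v = -1}

/-- `ν_r(G_n) ∈ ℝ ∪ {+∞}`: as `γ_r(G_n)` with `Q_r^{S^{n-1}}` in place of
`C_r^{S^{n-1}}`. -/
def nuSph (n r : ℕ) : EReal :=
  sInf {x : EReal | ∃ l : ℝ, x = (l : EReal) ∧
    ∃ K : ↥(Sphere n) → ↥(Sphere n) → ℝ, memQr r K ∧
      (∀ v, K v v = l - 1) ∧
      ∀ u v : ↥(Sphere n),
        ⟪(u : EuclideanSpace ℝ (Fin n)), (v : EuclideanSpace ℝ (Fin n))⟫ ≤ 1 / 2 →
        K u v = -1}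


section Aux
variable {α : Type*}


lemma tsym_perm (d : ℕ) (T : (Fin d → α) → ℝ) (v : Fin d → α) (ρ : Equiv.Perm (Fin d)) :
    tsym d T (v ∘ ρ) = tsym d T v := by
  unfold tsym
  congr 1
  exact Fintype.sum_bijective (ρ * ·) (Group.mulLeft_bijective ρ) _ _ (fun π => rfl)

lemma tsym_tsym (d : ℕ) (T : (Fin d → α) → ℝ) : tsym d (tsym d T) = tsym d T := by
  funext v
  have h : ∀ π : Equiv.Perm (Fin d), tsym d T (v ∘ π) = tsym d T v := fun π => tsym_perm d T v π
  unfold tsym at h ⊢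
  rw [Finset.sum_congr rfl (fun π _ => h π), Finset.sum_const]
  rw [nsmul_eq_mul, Finset.card_univ, Fintype.card_perm, Fintype.card_fin]
  rw [mul_inv_cancel_left₀ (show ((d.factorial:ℝ)) ≠ 0 by exact_mod_cast Nat.factorial_ne_zero d)]

lemma tsym_stk_apply (d : ℕ) (T : (Fin d → α) → ℝ) (v : Fin (d + 1) → α) :
    tsym (d + 1) (stk d 1 T) v
      = ((d + 1 : ℕ) : ℝ)⁻¹ *
        ∑ p : Fin (d + 1), tsym d T (fun i => v (Equiv.swap 0 p i.succ)) := by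
  unfold tsym stk
  have step1 : ∑ π : Equiv.Perm (Fin (d + 1)), T (fun i => (v ∘ π) (Fin.castAdd 1 i))
      = ∑ π : Equiv.Perm (Fin (d + 1)), T (fun i => v (π i.succ)) := by
    refine (Fintype.sum_bijective (· * finRotate (d + 1)) (Group.mulRight_bijective _) _ _
      (fun π => ?_)).symm
    congr 1
    funext i
    simp only [Function.comp_apply, Equiv.Perm.mul_apply, finRotate_succ_apply]
    congr 1
    have : (Fin.castAdd 1 i) + 1 = i.succ := Fin.coeSucc_eq_succ
    rw [this]
  rw [step1]
  rw [← Equiv.sum_comp (Equiv.Perm.decomposeFin (n := d)).symm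
      (fun π => T (fun i => v (π i.succ)))]
  rw [Fintype.sum_prod_type]
  have step2 : ∀ p : Fin (d + 1), ∀ e : Equiv.Perm (Fin d),
      T (fun i => v ((Equiv.Perm.decomposeFin.symm (p, e)) i.succ))
        = T ((fun i => v (Equiv.swap 0 p i.succ)) ∘ e) := by
    intro p e
    congr 1
    funext i
    simp [Equiv.Perm.decomposeFin_symm_apply_succ]
  calc ((d + 1).factorial : ℝ)⁻¹ *
        ∑ p : Fin (d + 1), ∑ e : Equiv.Perm (Fin d),
          T (fun i => v ((Equiv.Perm.decomposeFin.symm (p, e)) i.succ))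
      = ((d + 1).factorial : ℝ)⁻¹ *
        ∑ p : Fin (d + 1), (d.factorial : ℝ) *
          ((d.factorial : ℝ)⁻¹ * ∑ e : Equiv.Perm (Fin d),
            T ((fun i => v (Equiv.swap 0 p i.succ)) ∘ e)) := by
        congr 1
        refine Finset.sum_congr rfl (fun p _ => ?_)
        rw [mul_inv_cancel_left₀ (show ((d.factorial:ℝ)) ≠ 0 by
          exact_mod_cast Nat.factorial_ne_zero d)]
        exact Finset.sum_congr rfl (fun e _ => step2 p e)
    _ = ((d + 1 : ℕ) : ℝ)⁻¹ * ∑ p : Fin (d + 1),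
          ((d.factorial : ℝ)⁻¹ * ∑ e : Equiv.Perm (Fin d),
            T ((fun i => v (Equiv.swap 0 p i.succ)) ∘ e)) := by
        rw [← Finset.mul_sum, ← mul_assoc]
        congr 1
        rw [Nat.factorial_succ]
        push_cast
        rw [mul_inv, mul_assoc, inv_mul_cancel₀ (show ((d.factorial:ℝ)) ≠ 0 by
          exact_mod_cast Nat.factorial_ne_zero d), mul_one]

lemma stk_stk (d r : ℕ) (T : (Fin d → α) → ℝ) :
    stk d (r + 1) T = stk (d + r) 1 (stk d r T) := by
  funext v
  rfl

lemma tsym_stk_add (d : ℕ) (T N S : (Fin d → α) → ℝ)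
    (h : tsym d T = fun v => tsym d N v + tsym d S v) :
    tsym (d + 1) (stk d 1 T)
      = fun v => tsym (d + 1) (stk d 1 N) v + tsym (d + 1) (stk d 1 S) v := by
  funext v
  rw [tsym_stk_apply, tsym_stk_apply, tsym_stk_apply]
  have : ∀ p : Fin (d + 1), tsym d T (fun i => v (Equiv.swap 0 p i.succ))
      = tsym d N (fun i => v (Equiv.swap 0 p i.succ))
        + tsym d S (fun i => v (Equiv.swap 0 p i.succ)) := by
    intro p; rw [h]
  rw [Finset.sum_congr rfl (fun p _ => this p), Finset.sum_add_distrib, mul_add]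

lemma tsym_stk_congr (d : ℕ) (T N : (Fin d → α) → ℝ) (h : tsym d T = tsym d N) :
    tsym (d + 1) (stk d 1 T) = tsym (d + 1) (stk d 1 N) := by
  funext v
  rw [tsym_stk_apply, tsym_stk_apply, h]


end Aux

section Mem2
variable {X : Type*} [TopologicalSpace X]

variable {X : Type*} [TopologicalSpace X]

lemma append_castAdd_eq (r : ℕ) (u : Fin 2 → X) (z : Fin (r + 1) → X) :
    (fun j : Fin (2 + r) => Fin.append u z (Fin.castAdd 1 j))
      = Fin.append u (fun i : Fin r => z (Fin.castAdd 1 i)) := by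
  funext j
  refine Fin.addCases (fun a => ?_) (fun b => ?_) j
  · have h1 : (Fin.castAdd 1 (Fin.castAdd r a)) = Fin.castAdd (r + 1) a := Fin.ext rfl
    rw [h1, Fin.append_left, Fin.append_left]
  · have h1 : (Fin.castAdd 1 (Fin.natAdd 2 b)) = Fin.natAdd 2 (Fin.castAdd 1 b) := Fin.ext rfl
    rw [h1, Fin.append_right, Fin.append_right]

lemma memCr_succ {r : ℕ} {K : X → X → ℝ} (h : memCr r K) : memCr (r + 1) K := by
  obtain ⟨hk, N, hN, heq⟩ := h
  refine ⟨hk, stk (2 + r) 1 N, fun v => hN _, ?_⟩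
  show tsym (2 + r + 1) (stk 2 (r + 1) (kerTensor K)) = _
  rw [stk_stk]
  exact tsym_stk_congr (2 + r) _ N heq

lemma memQr_succ {r : ℕ} {K : X → X → ℝ} (h : memQr r K) : memQr (r + 1) K := by
  obtain ⟨hk, N, S, hN, ⟨hScont, hSpsd⟩, heq⟩ := h
  refine ⟨hk, stk (2 + r) 1 N, stk (2 + r) 1 S, fun v => hN _, ⟨?_, ?_⟩, ?_⟩
  · exact hScont.comp (continuous_pi fun i => continuous_apply _)
  · intro z
    have hker : (fun x y => stk (2 + r) 1 S ((Fin.append ![x, y] z : Fin (2 + (r+1)) → X)))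
        = fun x y => S (Fin.append ![x, y] (fun i : Fin r => z (Fin.castAdd 1 i))) := by
      funext x y
      show S _ = _
      rw [append_castAdd_eq r ![x, y] z]
    rw [hker]
    exact hSpsd _
  · show tsym (2 + r + 1) (stk 2 (r + 1) (kerTensor K)) = _
    rw [stk_stk]
    exact tsym_stk_add (2 + r) _ N S heq


end Mem2

def kissSet (n : ℕ) : Set ℕ :=
  {k : ℕ | ∃ X : Finset ↥(Sphere n),
    (∀ u ∈ X, ∀ v ∈ X, u ≠ v →
      ⟪(u : EuclideanSpace ℝ (Fin n)), (v : EuclideanSpace ℝ (Fin n))⟫ ≤ 1 / 2) ∧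
    X.card = k}


lemma kissingNumber_eq_sSup (n : ℕ) : kissingNumber n = sSup (kissSet n) := rfl


lemma norm_of_mem_sphere' {n : ℕ} (u : ↥(Sphere n)) : ‖(u : EuclideanSpace ℝ (Fin n))‖ = 1 := by
  have := u.2
  rwa [Metric.mem_sphere, dist_zero_right] at this

lemma one_le_dist_of_inner {n : ℕ} (u v : ↥(Sphere n))
    (h : ⟪(u : EuclideanSpace ℝ (Fin n)), (v : EuclideanSpace ℝ (Fin n))⟫ ≤ 1 / 2) :
    (1 : ℝ) ≤ dist u v := by
  rw [Subtype.dist_eq, dist_eq_norm]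
  have hsq : ‖(u : EuclideanSpace ℝ (Fin n)) - v‖ ^ 2 =
      2 - 2 * ⟪(u : EuclideanSpace ℝ (Fin n)), (v : EuclideanSpace ℝ (Fin n))⟫ := by
    rw [norm_sub_sq_real, norm_of_mem_sphere', norm_of_mem_sphere']; ring
  nlinarith [norm_nonneg ((u : EuclideanSpace ℝ (Fin n)) - v)]

lemma kissSet_bddAbove (n : ℕ) : BddAbove (kissSet n) := by
  obtain ⟨t, -, htfin, htcov⟩ := Metric.finite_approx_of_totallyBounded
    (isCompact_sphere (0 : EuclideanSpace ℝ (Fin n)) 1).totallyBounded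
    (1/2) (by norm_num)
  refine ⟨htfin.toFinset.card, fun k hk => ?_⟩
  obtain ⟨X, hX, rfl⟩ := hk
  -- each u in X lies in some ball of t
  have hc : ∀ u : ↥(Sphere n), ∃ y ∈ htfin.toFinset,
      dist (u : EuclideanSpace ℝ (Fin n)) y < 1/2 := by
    intro u
    have := htcov u.2
    simp only [Set.mem_iUnion] at this
    obtain ⟨y, hy, hmem⟩ := this
    exact ⟨y, htfin.mem_toFinset.2 hy, Metric.mem_ball.1 hmem⟩
  choose g hg1 hg2 using hc
  refine Finset.card_le_card_of_injOn g (fun u _ => hg1 u) ?_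
  intro u hu v hv huv
  by_contra hne
  have h1 : (1:ℝ) ≤ dist u v := one_le_dist_of_inner u v (hX u hu v hv hne)
  have h2 : dist u v < 1 := by
    have := dist_triangle (u : EuclideanSpace ℝ (Fin n)) (g u) (v : EuclideanSpace ℝ (Fin n))
    rw [Subtype.dist_eq]
    calc dist (u : EuclideanSpace ℝ (Fin n)) (v : EuclideanSpace ℝ (Fin n))
        ≤ dist (u : EuclideanSpace ℝ (Fin n)) (g u) + dist (g u) (v : EuclideanSpace ℝ (Fin n)) := this
      _ < 1 := by
          have h3 := hg2 u
          have h4 := hg2 v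
          rw [huv] at h3
          rw [huv, dist_comm (g v) (v : EuclideanSpace ℝ (Fin n))]
          linarith
  linarith

lemma spherePt (n : ℕ) (hn : 2 ≤ n) : (Sphere n).Nonempty := by
  refine ⟨EuclideanSpace.single (⟨0, by omega⟩ : Fin n) (1:ℝ), ?_⟩
  rw [Metric.mem_sphere, dist_zero_right, EuclideanSpace.norm_single, norm_one]

lemma one_mem_kissSet (n : ℕ) (hn : 2 ≤ n) : 1 ∈ kissSet n := by
  obtain ⟨p, hp⟩ := spherePt n hn
  exact ⟨{⟨p, hp⟩}, by
    intro u hu v hv hne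
    rw [Finset.mem_singleton] at hu hv
    exact absurd (hu.trans hv.symm) hne, Finset.card_singleton _⟩

lemma kissingNumber_mem (n : ℕ) (hn : 2 ≤ n) : kissingNumber n ∈ kissSet n :=
  Nat.sSup_mem ⟨1, one_mem_kissSet n hn⟩ (kissSet_bddAbove n)

lemma one_le_kissingNumber (n : ℕ) (hn : 2 ≤ n) : 1 ≤ kissingNumber n :=
  le_csSup (kissSet_bddAbove n) (one_mem_kissSet n hn)



section SumLemmas
variable {α : Type*} {ι : Type*} [Fintype ι]

lemma sum_tsym_tuple (d : ℕ) (T : (Fin d → α) → ℝ) (c : ι → α) :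
    ∑ f : Fin d → ι, tsym d T (c ∘ f) = ∑ f : Fin d → ι, T (c ∘ f) := by
  unfold tsym
  rw [← Finset.mul_sum, Finset.sum_comm]
  have hinner : ∀ π : Equiv.Perm (Fin d),
      ∑ f : Fin d → ι, T ((c ∘ f) ∘ π) = ∑ f : Fin d → ι, T (c ∘ f) := by
    intro π
    exact Equiv.sum_comp (Equiv.piCongrLeft' (fun _ => ι) π.symm) (fun h => T (c ∘ h))
  rw [Finset.sum_congr rfl (fun π _ => hinner π), Finset.sum_const, Finset.card_univ,
    Fintype.card_perm, Fintype.card_fin, nsmul_eq_mul, ← mul_assoc,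
    inv_mul_cancel₀ (show ((d.factorial:ℝ)) ≠ 0 by exact_mod_cast Nat.factorial_ne_zero d),
    one_mul]

lemma comp_append (c : ι → α) {m n : ℕ} (a : Fin m → ι) (b : Fin n → ι) :
    c ∘ (Fin.append a b) = Fin.append (c ∘ a) (c ∘ b) := by
  funext j
  refine Fin.addCases (fun i => ?_) (fun i => ?_) j
  · simp [Fin.append_left]
  · simp [Fin.append_right]

lemma comp_pair (c : ι → α) (x y : ι) : c ∘ ![x, y] = ![c x, c y] := by
  funext j
  match j with
  | 0 => rfl
  | 1 => rfl

lemma sum_tuple_split (r : ℕ) (G : (Fin (2 + r) → α) → ℝ) (c : ι → α) :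
    ∑ f : Fin (2 + r) → ι, G (c ∘ f)
      = ∑ b : Fin r → ι, ∑ p : ι × ι, G (Fin.append ![c p.1, c p.2] (c ∘ b)) := by
  rw [← Equiv.sum_comp (Fin.appendEquiv 2 r) (fun f => G (c ∘ f)), Fintype.sum_prod_type,
    Finset.sum_comm]
  refine Finset.sum_congr rfl (fun b _ => ?_)
  rw [← Equiv.sum_comp (finTwoArrowEquiv ι).symm
    (fun a => G (c ∘ (Fin.appendEquiv 2 r (a, b))))]
  refine Fintype.sum_congr _ _ (fun p => ?_)
  have : (Fin.appendEquiv 2 r) ((finTwoArrowEquiv ι).symm p, b) = Fin.append ![p.1, p.2] b := rfl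
  rw [this, comp_append, comp_pair]

end SumLemmas


section LowerBound
variable {n r : ℕ}

lemma psd_sum_nonneg {X : Type*} {K : X → X → ℝ} (h : IsPSDKernel K)
    {ι : Type*} [Fintype ι] (c : ι → X) :
    0 ≤ ∑ p : ι × ι, K (c p.1) (c p.2) := by
  have e := (Fintype.equivFin ι).symm
  have h1 := h (Fintype.card ι) (fun i => c (e i)) (fun _ => 1)
  simp only [mul_one] at h1
  rw [Fintype.sum_prod_type]
  rw [← Equiv.sum_comp e (fun x => ∑ y : ι, K (c x) (c y))]
  refine le_trans h1 (le_of_eq (Finset.sum_congr rfl (fun i _ => ?_)))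
  rw [← Equiv.sum_comp e (fun y => K (c (e i)) (c y))]

lemma memQr_lower_bound (hn : 2 ≤ n) (l : ℝ) (K : ↥(Sphere n) → ↥(Sphere n) → ℝ)
    (hm : memQr r K) (hdiag : ∀ v, K v v = l - 1)
    (hneg : ∀ u v : ↥(Sphere n),
      ⟪(u : EuclideanSpace ℝ (Fin n)), (v : EuclideanSpace ℝ (Fin n))⟫ ≤ 1 / 2 →
      K u v = -1) :
    (kissingNumber n : ℝ) ≤ l := by
  classical
  obtain ⟨X, hX, hcard⟩ := kissingNumber_mem n hn
  set k := kissingNumber n with hkdef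
  have hk1 : 1 ≤ k := one_le_kissingNumber n hn
  obtain ⟨-, N, S, hN, hS, heq⟩ := hm
  set c : {x : ↥(Sphere n) // x ∈ X} → ↥(Sphere n) := fun i => i.1 with hc
  have hcardι : Fintype.card {x : ↥(Sphere n) // x ∈ X} = k := by
    rw [Fintype.card_coe, hcard]
  -- sum the identity heq over all tuples from X
  have hsum : ∑ f : Fin (2 + r) → {x : ↥(Sphere n) // x ∈ X},
      tsym (2 + r) (stk 2 r (kerTensor K)) (c ∘ f)
      = ∑ f : Fin (2 + r) → {x : ↥(Sphere n) // x ∈ X},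
          (tsym (2 + r) N (c ∘ f) + tsym (2 + r) S (c ∘ f)) := by
    refine Finset.sum_congr rfl (fun f _ => ?_)
    rw [heq]
  -- left side
  have hL : ∑ f : Fin (2 + r) → {x : ↥(Sphere n) // x ∈ X},
      tsym (2 + r) (stk 2 r (kerTensor K)) (c ∘ f)
      = (Fintype.card (Fin r → {x : ↥(Sphere n) // x ∈ X}) : ℝ) * (k * (l - k)) := by
    rw [sum_tsym_tuple, sum_tuple_split]
    have hstk : ∀ (p : {x : ↥(Sphere n) // x ∈ X} × {x : ↥(Sphere n) // x ∈ X})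
        (b : Fin r → {x : ↥(Sphere n) // x ∈ X}),
        stk 2 r (kerTensor K) (Fin.append ![c p.1, c p.2] (c ∘ b)) = K (c p.1) (c p.2) := by
      intro p b
      show kerTensor K _ = _
      unfold kerTensor
      have h0 : (fun i : Fin 2 => Fin.append ![c p.1, c p.2] (c ∘ b) (Fin.castAdd r i)) 0
          = c p.1 := by
        show Fin.append ![c p.1, c p.2] (c ∘ b) (Fin.castAdd r (0 : Fin 2)) = c p.1
        rw [Fin.append_left]; rfl
      have h1 : (fun i : Fin 2 => Fin.append ![c p.1, c p.2] (c ∘ b) (Fin.castAdd r i)) 1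
          = c p.2 := by
        show Fin.append ![c p.1, c p.2] (c ∘ b) (Fin.castAdd r (1 : Fin 2)) = c p.2
        rw [Fin.append_left]; rfl
      rw [h0, h1]
    have hKsum : ∑ p : {x : ↥(Sphere n) // x ∈ X} × {x : ↥(Sphere n) // x ∈ X},
        K (c p.1) (c p.2) = k * (l - k) := by
      rw [Fintype.sum_prod_type]
      have hrow : ∀ x : {x : ↥(Sphere n) // x ∈ X},
          ∑ y : {x : ↥(Sphere n) // x ∈ X}, K (c x) (c y) = l - k := by
        intro x
        rw [← Finset.add_sum_erase _ _ (Finset.mem_univ x)]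
        have hoff : ∀ y ∈ Finset.univ.erase x, K (c x) (c y) = -1 := by
          intro y hy
          have hxy : c x ≠ c y := by
            intro hcc
            exact (Finset.mem_erase.1 hy).1 (Subtype.ext hcc).symm
          exact hneg _ _ (hX (c x) x.2 (c y) y.2 hxy)
        rw [Finset.sum_congr rfl hoff, Finset.sum_const, Finset.card_erase_of_mem
          (Finset.mem_univ x), Finset.card_univ, hcardι, hdiag, nsmul_eq_mul,
          Nat.cast_sub hk1]
        push_cast
        ring
      rw [Finset.sum_congr rfl (fun x _ => hrow x), Finset.sum_const, Finset.card_univ, hcardι,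
        nsmul_eq_mul]
    rw [Finset.sum_congr rfl (fun b _ => Finset.sum_congr rfl (fun p _ => hstk p b)),
      Finset.sum_const, Finset.card_univ, nsmul_eq_mul, hKsum]
  -- right side nonneg
  have hR : 0 ≤ ∑ f : Fin (2 + r) → {x : ↥(Sphere n) // x ∈ X},
      (tsym (2 + r) N (c ∘ f) + tsym (2 + r) S (c ∘ f)) := by
    rw [Finset.sum_add_distrib]
    have hN' : 0 ≤ ∑ f : Fin (2 + r) → {x : ↥(Sphere n) // x ∈ X}, tsym (2 + r) N (c ∘ f) := by
      rw [sum_tsym_tuple]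
      exact Finset.sum_nonneg (fun f _ => hN _)
    have hS' : 0 ≤ ∑ f : Fin (2 + r) → {x : ↥(Sphere n) // x ∈ X}, tsym (2 + r) S (c ∘ f) := by
      rw [sum_tsym_tuple, sum_tuple_split]
      refine Finset.sum_nonneg (fun b _ => ?_)
      exact psd_sum_nonneg (hS.2 (c ∘ b)) c
    linarith
  rw [← hsum, hL] at hR
  have hkpos : (0:ℝ) < k := by exact_mod_cast hk1
  have hcpos : (0:ℝ) < (Fintype.card (Fin r → {x : ↥(Sphere n) // x ∈ X}) : ℝ) := by
    have : 0 < Fintype.card (Fin r → {x : ↥(Sphere n) // x ∈ X}) := by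
      rw [Fintype.card_pi]
      refine Finset.prod_pos (fun i _ => ?_)
      rw [hcardι]; omega
    exact_mod_cast this
  nlinarith [mul_pos hcpos hkpos]

end LowerBound


section Turan
open Finset


lemma turan_count {V : Type*} [DecidableEq V] (k : ℕ) (hk : 1 ≤ k)
    (R : V → V → Prop) [DecidableRel R] (hsymm : ∀ a b, R a b → R b a)
    (hbound : ∀ S : Finset V, (∀ a ∈ S, ∀ b ∈ S, a ≠ b → ¬ R a b) → S.card ≤ k)
    (U : Finset V) :
    ((U.card : ℝ)^2 / k - U.card)
      ≤ (((U.offDiag).filter (fun p => R p.1 p.2)).card : ℝ) := by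
  induction U using Finset.strongInduction with
  | _ U ih =>
    rcases U.eq_empty_or_nonempty with rfl | hUne
    · simp
    -- maximal independent subset
    have hIne : (U.powerset.filter
        (fun S => ∀ a ∈ S, ∀ b ∈ S, a ≠ b → ¬ R a b)).Nonempty :=
      ⟨∅, by simp⟩
    obtain ⟨S, hSmem, hSmax⟩ := Finset.exists_max_image _ Finset.card hIne
    rw [Finset.mem_filter, Finset.mem_powerset] at hSmem
    obtain ⟨hSU, hSind⟩ := hSmem
    have hs_le_k : S.card ≤ k := hbound S hSind
    have hs1 : 1 ≤ S.card := by
      obtain ⟨v, hv⟩ := hUne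
      have : ({v} : Finset V).card ≤ S.card := by
        refine hSmax {v} ?_
        rw [Finset.mem_filter, Finset.mem_powerset]
        refine ⟨Finset.singleton_subset_iff.2 hv, ?_⟩
        intro a ha b hb hab
        rw [Finset.mem_singleton] at ha hb
        exact absurd (ha.trans hb.symm) hab
      simpa using this
    have hSne : S.Nonempty := Finset.card_pos.1 hs1
    set U' := U \ S with hU'
    have hU'sub : U' ⊂ U := Finset.sdiff_ssubset hSU hSne
    -- every vertex outside has an R-neighbor in S
    have hnbr : ∀ v ∈ U', ∃ u ∈ S, R v u := by
      intro v hv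
      obtain ⟨hvU, hvS⟩ := Finset.mem_sdiff.1 hv
      by_contra hno
      push_neg at hno
      have : (insert v S).card ≤ S.card := by
        refine hSmax _ ?_
        rw [Finset.mem_filter, Finset.mem_powerset]
        refine ⟨Finset.insert_subset hvU hSU, ?_⟩
        intro a ha b hb hab
        rw [Finset.mem_insert] at ha hb
        rcases ha with rfl | ha
        · rcases hb with rfl | hb
          · exact absurd rfl hab
          · exact hno b hb
        · rcases hb with rfl | hb
          · exact fun h => hno a ha (hsymm _ _ h)
          · exact hSind a ha b hb hab
      rw [Finset.card_insert_of_notMem hvS] at this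
      omega
    choose g hg1 hg2 using hnbr
    classical
    set F := (U.offDiag).filter (fun p => R p.1 p.2) with hF
    set F1 := (U'.offDiag).filter (fun p => R p.1 p.2) with hF1
    set F2 := ((U' ×ˢ S)).filter (fun p => R p.1 p.2) with hF2
    set F3 := ((S ×ˢ U')).filter (fun p => R p.1 p.2) with hF3
    have hdisjUS : ∀ x, x ∈ U' → x ∈ S → False := by
      intro x hx hxS
      exact (Finset.mem_sdiff.1 hx).2 hxS
    have hsub : F1 ∪ F2 ∪ F3 ⊆ F := by
      intro p hp
      rw [Finset.mem_union, Finset.mem_union] at hp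
      rw [Finset.mem_filter, Finset.mem_offDiag]
      rcases hp with (hp | hp) | hp
      · rw [Finset.mem_filter, Finset.mem_offDiag] at hp
        exact ⟨⟨(Finset.mem_sdiff.1 hp.1.1).1, (Finset.mem_sdiff.1 hp.1.2.1).1, hp.1.2.2⟩, hp.2⟩
      · rw [Finset.mem_filter, Finset.mem_product] at hp
        refine ⟨⟨(Finset.mem_sdiff.1 hp.1.1).1, hSU hp.1.2, fun h => ?_⟩, hp.2⟩
        exact hdisjUS p.1 hp.1.1 (h ▸ hp.1.2)
      · rw [Finset.mem_filter, Finset.mem_product] at hp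
        refine ⟨⟨hSU hp.1.1, (Finset.mem_sdiff.1 hp.1.2).1, fun h => ?_⟩, hp.2⟩
        exact hdisjUS p.2 hp.1.2 (h ▸ hp.1.1)
    have hd12 : Disjoint F1 F2 := by
      rw [Finset.disjoint_left]
      intro p hp1 hp2
      rw [hF1, Finset.mem_filter, Finset.mem_offDiag] at hp1
      rw [hF2, Finset.mem_filter, Finset.mem_product] at hp2
      exact hdisjUS p.2 hp1.1.2.1 hp2.1.2
    have hd123 : Disjoint (F1 ∪ F2) F3 := by
      rw [Finset.disjoint_left]
      intro p hp12 hp3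
      rw [hF3, Finset.mem_filter, Finset.mem_product] at hp3
      rw [Finset.mem_union] at hp12
      rcases hp12 with hp | hp
      · rw [hF1, Finset.mem_filter, Finset.mem_offDiag] at hp
        exact hdisjUS p.1 hp.1.1 hp3.1.1
      · rw [hF2, Finset.mem_filter, Finset.mem_product] at hp
        exact hdisjUS p.1 hp.1.1 hp3.1.1
    have hcards : F1.card + F2.card + F3.card ≤ F.card := by
      calc F1.card + F2.card + F3.card
          = (F1 ∪ F2).card + F3.card := by rw [Finset.card_union_of_disjoint hd12]
        _ = (F1 ∪ F2 ∪ F3).card := (Finset.card_union_of_disjoint hd123).symm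
        _ ≤ F.card := Finset.card_le_card hsub
    set gt : V → V := fun v => if h : v ∈ U' then g v h else v with hgt
    have hg1' : ∀ v ∈ U', gt v ∈ S := by
      intro v hv; rw [hgt]; simp only [dif_pos hv]; exact hg1 v hv
    have hg2' : ∀ v ∈ U', R v (gt v) := by
      intro v hv; rw [hgt]; simp only [dif_pos hv]; exact hg2 v hv
    have hF2card : U'.card ≤ F2.card := by
      refine Finset.card_le_card_of_injOn (fun v => (v, gt v)) ?_ ?_
      · intro v hv
        rw [hF2, Finset.mem_coe, Finset.mem_filter, Finset.mem_product]
        exact ⟨⟨hv, hg1' v hv⟩, hg2' v hv⟩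
      · intro a _ b _ h
        exact congrArg Prod.fst h
    have hF3card : U'.card ≤ F3.card := by
      refine Finset.card_le_card_of_injOn (fun v => (gt v, v)) ?_ ?_
      · intro v hv
        rw [hF3, Finset.mem_coe, Finset.mem_filter, Finset.mem_product]
        exact ⟨⟨hg1' v hv, hv⟩, hsymm _ _ (hg2' v hv)⟩
      · intro a _ b _ h
        exact congrArg Prod.snd h
    have hF1card := ih U' hU'sub
    -- arithmetic
    have hcardU' : U'.card = U.card - S.card := Finset.card_sdiff_of_subset hSU
    have hsU : S.card ≤ U.card := Finset.card_le_card hSU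
    have hcastU' : (U'.card : ℝ) = (U.card : ℝ) - S.card := by
      rw [hcardU', Nat.cast_sub hsU]
    have hk0 : (0:ℝ) < k := by exact_mod_cast hk
    set m : ℝ := (U.card : ℝ) with hm
    set sc : ℝ := (S.card : ℝ) with hsc
    have hsk : sc ≤ k := by rw [hsc]; exact_mod_cast hs_le_k
    have hsm : sc ≤ m := by rw [hsc, hm]; exact_mod_cast hsU
    have harith : m^2 / k - m ≤ ((m - sc)^2 / k - (m - sc)) + 2 * (m - sc) := by
      have h2m : (0:ℝ) ≤ 2*m - sc := by nlinarith
      have hdiv : sc * (2*m - sc) / k ≤ 2*m - sc := by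
        rw [div_le_iff₀ hk0]
        nlinarith
      have hexp : m^2 / k = (m - sc)^2 / k + sc * (2*m - sc) / k := by
        field_simp
        ring
      linarith
    have hchain : ((U'.card : ℝ)^2 / k - U'.card) + 2 * (m - sc) ≤ (F.card : ℝ) := by
      have h1 : ((U'.card : ℝ)) ≤ (F2.card : ℝ) := by exact_mod_cast hF2card
      have h2 : ((U'.card : ℝ)) ≤ (F3.card : ℝ) := by exact_mod_cast hF3card
      have h3 : (F1.card : ℝ) + F2.card + F3.card ≤ (F.card : ℝ) := by exact_mod_cast hcards
      rw [hcastU'] at h1 h2 ⊢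
      linarith [hF1card, hcastU' ▸ hF1card]
    rw [hcastU'] at hchain
    calc m^2/k - m ≤ ((m - sc)^2 / k - (m - sc)) + 2 * (m - sc) := harith
      _ ≤ (F.card : ℝ) := hchain

end Turan

section Threshold
variable {n : ℕ}

lemma sphereNonempty (hn : 2 ≤ n) : Nonempty ↥(Sphere n) := by
  obtain ⟨p, hp⟩ := spherePt n hn
  exact ⟨⟨p, hp⟩⟩

lemma exists_pair_gt_half (hn : 2 ≤ n) (q : Fin (kissingNumber n + 1) → ↥(Sphere n)) :
    ∃ i j, i ≠ j ∧ 1/2 <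
      ⟪(q i : EuclideanSpace ℝ (Fin n)), (q j : EuclideanSpace ℝ (Fin n))⟫ := by
  classical
  by_contra hno
  push_neg at hno
  have hinj : Function.Injective q := by
    intro i j hij
    by_contra hne
    have h1 := hno i j (fun h => hne h)
    rw [hij] at h1
    have : ⟪(q j : EuclideanSpace ℝ (Fin n)), (q j : EuclideanSpace ℝ (Fin n))⟫ = 1 := by
      rw [real_inner_self_eq_norm_sq, norm_of_mem_sphere']; norm_num
    rw [this] at h1
    norm_num at h1
  have hmem : kissingNumber n + 1 ∈ kissSet n := by
    refine ⟨Finset.univ.image q, ?_, ?_⟩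
    · intro u hu v hv huv
      rw [Finset.mem_image] at hu hv
      obtain ⟨i, -, rfl⟩ := hu
      obtain ⟨j, -, rfl⟩ := hv
      exact hno i j (fun h => huv (by rw [h]))
    · rw [Finset.card_image_of_injective _ hinj, Finset.card_univ, Fintype.card_fin]
  have := le_csSup (kissSet_bddAbove n) hmem
  rw [← kissingNumber_eq_sSup] at this
  omega

lemma exists_threshold (hn : 2 ≤ n) :
    ∃ t₁ : ℝ, 1/2 < t₁ ∧ t₁ ≤ 3/4 ∧
      ∀ q : Fin (kissingNumber n + 1) → ↥(Sphere n), ∃ i j, i ≠ j ∧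
        t₁ ≤ ⟪(q i : EuclideanSpace ℝ (Fin n)), (q j : EuclideanSpace ℝ (Fin n))⟫ := by
  classical
  have : Nonempty ↥(Sphere n) := sphereNonempty hn
  set k := kissingNumber n with hk
  set F : (Fin (k + 1) → ↥(Sphere n)) → ℝ := fun q =>
    ∑ p ∈ Finset.univ.offDiag, max 0
      (⟪(q p.1 : EuclideanSpace ℝ (Fin n)), (q p.2 : EuclideanSpace ℝ (Fin n))⟫ - 1/2) with hF
  have hFcont : Continuous F := by
    refine continuous_finset_sum _ (fun p _ => ?_)
    refine Continuous.max continuous_const (Continuous.sub ?_ continuous_const)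
    exact Continuous.inner
      (continuous_subtype_val.comp (continuous_apply p.1))
      (continuous_subtype_val.comp (continuous_apply p.2))
  have hFpos : ∀ q : Fin (k+1) → ↥(Sphere n), ∃ p ∈ (Finset.univ.offDiag : Finset (Fin (k+1) × Fin (k+1))),
      (0:ℝ) < ⟪(q p.1 : EuclideanSpace ℝ (Fin n)), (q p.2 : EuclideanSpace ℝ (Fin n))⟫ - 1/2 := by
    intro q
    obtain ⟨i, j, hij, hgt⟩ := exists_pair_gt_half hn q
    exact ⟨(i, j), Finset.mem_offDiag.2 ⟨Finset.mem_univ _, Finset.mem_univ _, hij⟩,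
      by linarith⟩
  obtain ⟨q₀, -, hmin⟩ := isCompact_univ.exists_isMinOn Set.univ_nonempty hFcont.continuousOn
  set c := F q₀ with hc
  have hcpos : 0 < c := by
    obtain ⟨p, hp, hppos⟩ := hFpos q₀
    have hterm : (0:ℝ) < max 0
        (⟪(q₀ p.1 : EuclideanSpace ℝ (Fin n)), (q₀ p.2 : EuclideanSpace ℝ (Fin n))⟫ - 1/2) :=
      lt_max_of_lt_right hppos
    refine lt_of_lt_of_le hterm ?_
    exact Finset.single_le_sum
      (f := fun p : Fin (k+1) × Fin (k+1) => max 0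
        (⟪(q₀ p.1 : EuclideanSpace ℝ (Fin n)), (q₀ p.2 : EuclideanSpace ℝ (Fin n))⟫ - 1/2))
      (fun p _ => le_max_left _ _) hp
  set D := ((Finset.univ.offDiag : Finset (Fin (k+1) × Fin (k+1))).card : ℝ) with hD
  have hDpos : 0 < D := by
    rw [hD]
    have h1 : 1 ≤ k := one_le_kissingNumber n hn
    have hmem01 : ((⟨0, by omega⟩ : Fin (k+1)), (⟨1, by omega⟩ : Fin (k+1))) ∈
        (Finset.univ.offDiag : Finset (Fin (k+1) × Fin (k+1))) := by
      refine Finset.mem_offDiag.2 ⟨Finset.mem_univ _, Finset.mem_univ _, ?_⟩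
      simp only [Ne, Fin.mk.injEq]
      omega
    have hpos := Finset.card_pos.2 ⟨_, hmem01⟩
    exact_mod_cast hpos
  refine ⟨1/2 + min (c / D) (1/4), by
    have hmin0 : 0 < min (c / D) (1/4) := lt_min (div_pos hcpos hDpos) (by norm_num)
    linarith, by
    have : min (c / D) (1/4) ≤ 1/4 := min_le_right _ _
    linarith, ?_⟩
  intro q
  have hq : c ≤ F q := hmin (Set.mem_univ q)
  -- some term is at least c / D
  have hterm : ∃ p ∈ (Finset.univ.offDiag : Finset (Fin (k+1) × Fin (k+1))),
      c / D ≤ max 0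
        (⟪(q p.1 : EuclideanSpace ℝ (Fin n)), (q p.2 : EuclideanSpace ℝ (Fin n))⟫ - 1/2) := by
    by_contra hno
    push_neg at hno
    have hlt : F q < D * (c / D) := by
      rw [hF]
      have hne : (Finset.univ.offDiag : Finset (Fin (k+1) × Fin (k+1))).Nonempty := by
        rw [← Finset.card_pos]
        have h' := hDpos
        rw [hD] at h'
        exact_mod_cast h'
      calc ∑ p ∈ Finset.univ.offDiag, max 0
            (⟪(q p.1 : EuclideanSpace ℝ (Fin n)), (q p.2 : EuclideanSpace ℝ (Fin n))⟫ - 1/2)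
          < ∑ p ∈ Finset.univ.offDiag, c / D := Finset.sum_lt_sum_of_nonempty hne
            (fun p hp => hno p hp)
        _ = D * (c / D) := by rw [Finset.sum_const, nsmul_eq_mul, hD]
    rw [mul_div_cancel₀ _ (ne_of_gt hDpos)] at hlt
    linarith
  obtain ⟨p, hp, hple⟩ := hterm
  have hcD : 0 < c / D := div_pos hcpos hDpos
  have hval : c / D ≤
      ⟪(q p.1 : EuclideanSpace ℝ (Fin n)), (q p.2 : EuclideanSpace ℝ (Fin n))⟫ - 1/2 := by
    rcases le_or_gt (⟪(q p.1 : EuclideanSpace ℝ (Fin n)),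
        (q p.2 : EuclideanSpace ℝ (Fin n))⟫ - 1/2) 0 with h | h
    · rw [max_eq_left h] at hple; linarith
    · rwa [max_eq_right h.le] at hple
  refine ⟨p.1, p.2, (Finset.mem_offDiag.1 hp).2.2, ?_⟩
  have : min (c / D) (1/4) ≤ c / D := min_le_left _ _
  linarith

end Threshold


section PermSum

lemma perm_sum_nonneg {β : Type*} (d : ℕ) (K : β → β → ℝ)
    (hcore : ∀ w : Fin d → β, 0 ≤ ∑ p ∈ Finset.univ.offDiag, K (w p.1) (w p.2))
    (v : Fin d → β) (i₀ i₁ : Fin d) (hne : i₀ ≠ i₁) :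
    0 ≤ ∑ π : Equiv.Perm (Fin d), K (v (π i₀)) (v (π i₁)) := by
  classical
  have key : ∀ a b : Fin d, a ≠ b →
      ∑ π : Equiv.Perm (Fin d), K (v (π a)) (v (π b))
        = ∑ π : Equiv.Perm (Fin d), K (v (π i₀)) (v (π i₁)) := by
    intro a b hab
    have h01 : i₀ ≠ Equiv.swap i₀ a b := by
      intro h
      have hb := congrArg (Equiv.swap i₀ a) h
      rw [Equiv.swap_apply_self, Equiv.swap_apply_left] at hb
      exact hab hb
    have hρ₀ : Equiv.swap i₀ a (Equiv.swap i₁ (Equiv.swap i₀ a b) i₀) = a := by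
      rw [Equiv.swap_apply_of_ne_of_ne hne h01, Equiv.swap_apply_left]
    have hρ₁ : Equiv.swap i₀ a (Equiv.swap i₁ (Equiv.swap i₀ a b) i₁) = b := by
      rw [Equiv.swap_apply_left, Equiv.swap_apply_self]
    refine Fintype.sum_bijective
      (· * (Equiv.swap i₀ a * Equiv.swap i₁ (Equiv.swap i₀ a b)))
      (Group.mulRight_bijective _) _ _ (fun π => ?_)
    simp only [Equiv.Perm.mul_apply]
    rw [hρ₀, hρ₁]
  have hmem : (i₀, i₁) ∈ (Finset.univ.offDiag : Finset (Fin d × Fin d)) :=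
    Finset.mem_offDiag.2 ⟨Finset.mem_univ _, Finset.mem_univ _, hne⟩
  have hcount : ((Finset.univ.offDiag : Finset (Fin d × Fin d)).card : ℝ) *
      ∑ π : Equiv.Perm (Fin d), K (v (π i₀)) (v (π i₁))
      = ∑ p ∈ (Finset.univ.offDiag : Finset (Fin d × Fin d)),
          ∑ π : Equiv.Perm (Fin d), K (v (π p.1)) (v (π p.2)) := by
    rw [Finset.sum_congr rfl (fun p hp => key p.1 p.2 (Finset.mem_offDiag.1 hp).2.2),
      Finset.sum_const, nsmul_eq_mul]
  have hswap : ∑ p ∈ (Finset.univ.offDiag : Finset (Fin d × Fin d)),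
      ∑ π : Equiv.Perm (Fin d), K (v (π p.1)) (v (π p.2))
      = ∑ π : Equiv.Perm (Fin d),
          ∑ p ∈ (Finset.univ.offDiag : Finset (Fin d × Fin d)), K (v (π p.1)) (v (π p.2)) :=
    Finset.sum_comm
  have hnn : 0 ≤ ∑ p ∈ (Finset.univ.offDiag : Finset (Fin d × Fin d)),
      ∑ π : Equiv.Perm (Fin d), K (v (π p.1)) (v (π p.2)) := by
    rw [hswap]
    exact Finset.sum_nonneg (fun π _ => hcore (v ∘ π))
  have hcpos : (0:ℝ) < ((Finset.univ.offDiag : Finset (Fin d × Fin d)).card : ℝ) := by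
    have := Finset.card_pos.2 ⟨_, hmem⟩
    exact_mod_cast this
  nlinarith [hcount ▸ hnn]

end PermSum


section Upper
variable {n : ℕ}

lemma gamma_le_of_large (hn : 2 ≤ n) (ε : ℝ) (hε : 0 < ε) :
    ∃ r₀ : ℕ, ∀ r : ℕ, r₀ ≤ r →
      gammaSph n r ≤ (((kissingNumber n : ℝ) + ε : ℝ) : EReal) := by
  classical
  obtain ⟨t₁, ht1, ht2, hthr⟩ := exists_threshold hn
  set k := kissingNumber n with hkdef
  have hk1 : 1 ≤ k := one_le_kissingNumber n hn
  have hk0 : (0:ℝ) < k := by exact_mod_cast hk1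
  set δ : ℝ := t₁ - 1/2 with hδ
  have hδ0 : 0 < δ := by rw [hδ]; linarith
  set f : ℝ → ℝ := fun t => max 0 (min 1 ((t - 1/2) / δ)) with hf
  have hf0 : ∀ t : ℝ, t ≤ 1/2 → f t = 0 := by
    intro t ht
    show max 0 (min 1 ((t - 1/2) / δ)) = 0
    have h1 : (t - 1/2)/δ ≤ 0 := div_nonpos_of_nonpos_of_nonneg (by linarith) hδ0.le
    rw [min_eq_right (by linarith), max_eq_left h1]
  have hf1 : ∀ t : ℝ, t₁ ≤ t → f t = 1 := by
    intro t ht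
    show max 0 (min 1 ((t - 1/2) / δ)) = 1
    have h1 : (1:ℝ) ≤ (t - 1/2)/δ := (one_le_div hδ0).2 (by rw [hδ]; linarith)
    rw [min_eq_left h1, max_eq_right zero_le_one]
  have hfdiag : f 1 = 1 := hf1 1 (by linarith)
  have hfnn : ∀ t : ℝ, 0 ≤ f t := fun t => le_max_left _ _
  have hfcont : Continuous f := by
    rw [hf]
    exact continuous_const.max (continuous_const.min
      ((continuous_id.sub continuous_const).div_const δ))
  set l : ℝ := (k:ℝ) + ε with hl
  have hlpos : 0 < l := by rw [hl]; positivity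
  set K : ↥(Sphere n) → ↥(Sphere n) → ℝ := fun u v =>
    l * f (⟪(u : EuclideanSpace ℝ (Fin n)), (v : EuclideanSpace ℝ (Fin n))⟫) - 1 with hK
  have hker : IsKernel K := by
    constructor
    · have hinner : Continuous (fun p : ↥(Sphere n) × ↥(Sphere n) =>
          ⟪(p.1 : EuclideanSpace ℝ (Fin n)), (p.2 : EuclideanSpace ℝ (Fin n))⟫) :=
        Continuous.inner (continuous_subtype_val.comp continuous_fst)
          (continuous_subtype_val.comp continuous_snd)
      exact (continuous_const.mul (hfcont.comp hinner)).sub continuous_const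
    · intro x y
      show l * f _ - 1 = l * f _ - 1
      rw [real_inner_comm]
  have hdiag : ∀ v : ↥(Sphere n), K v v = l - 1 := by
    intro v
    show l * f ⟪(v : EuclideanSpace ℝ (Fin n)), (v : EuclideanSpace ℝ (Fin n))⟫ - 1 = l - 1
    have : ⟪(v : EuclideanSpace ℝ (Fin n)), (v : EuclideanSpace ℝ (Fin n))⟫ = 1 := by
      rw [real_inner_self_eq_norm_sq, norm_of_mem_sphere']; norm_num
    rw [this, hfdiag, mul_one]
  have hneg : ∀ u v : ↥(Sphere n),
      ⟪(u : EuclideanSpace ℝ (Fin n)), (v : EuclideanSpace ℝ (Fin n))⟫ ≤ 1 / 2 →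
      K u v = -1 := by
    intro u v h
    show l * f _ - 1 = -1
    rw [hf0 _ h, mul_zero]
    norm_num
  -- the core Turán inequality for long tuples
  have hcore : ∀ m : ℕ, (k:ℝ) * l / ε ≤ m → ∀ w : Fin m → ↥(Sphere n),
      0 ≤ ∑ p ∈ Finset.univ.offDiag, K (w p.1) (w p.2) := by
    intro m hm w
    set R : Fin m → Fin m → Prop := fun a b =>
      t₁ ≤ ⟪(w a : EuclideanSpace ℝ (Fin n)), (w b : EuclideanSpace ℝ (Fin n))⟫ with hR
    letI : DecidableRel R := fun a b => Classical.dec _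
    have hsym : ∀ a b, R a b → R b a := by
      intro a b h
      show t₁ ≤ _
      rw [real_inner_comm]
      exact h
    have hbound : ∀ S : Finset (Fin m), (∀ a ∈ S, ∀ b ∈ S, a ≠ b → ¬ R a b) → S.card ≤ k := by
      intro S hS
      by_contra hgt
      push_neg at hgt
      obtain ⟨t, htS, htcard⟩ := Finset.exists_subset_card_eq (s := S) (n := k+1) hgt
      have e := Finset.equivFinOfCardEq htcard
      obtain ⟨i, j, hij, hge⟩ := hthr (fun i => w ((e.symm i : ↥t) : Fin m))
      have hab : ((e.symm i : ↥t) : Fin m) ≠ ((e.symm j : ↥t) : Fin m) := by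
        intro h
        exact hij (e.symm.injective (Subtype.ext h))
      exact hS _ (htS (e.symm i).2) _ (htS (e.symm j).2) hab hge
    have hTuran := turan_count k hk1 R hsym hbound Finset.univ
    rw [Finset.card_univ, Fintype.card_fin] at hTuran
    set C := ((Finset.univ.offDiag.filter
      (fun p : Fin m × Fin m => R p.1 p.2)).card : ℝ) with hC
    have hfsum : C ≤ ∑ p ∈ Finset.univ.offDiag,
        f ⟪(w p.1 : EuclideanSpace ℝ (Fin n)), (w p.2 : EuclideanSpace ℝ (Fin n))⟫ := by
      have hone : ∀ p ∈ Finset.univ.offDiag.filter (fun p : Fin m × Fin m => R p.1 p.2),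
          (1:ℝ) ≤ f ⟪(w p.1 : EuclideanSpace ℝ (Fin n)),
            (w p.2 : EuclideanSpace ℝ (Fin n))⟫ := by
        intro p hp
        rw [hf1 _ (Finset.mem_filter.1 hp).2]
      calc C = ∑ _p ∈ Finset.univ.offDiag.filter (fun p : Fin m × Fin m => R p.1 p.2),
            (1:ℝ) := by rw [Finset.sum_const, nsmul_eq_mul, mul_one]
        _ ≤ ∑ p ∈ Finset.univ.offDiag.filter (fun p : Fin m × Fin m => R p.1 p.2),
            f ⟪(w p.1 : EuclideanSpace ℝ (Fin n)),
              (w p.2 : EuclideanSpace ℝ (Fin n))⟫ := Finset.sum_le_sum hone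
        _ ≤ _ := Finset.sum_le_sum_of_subset_of_nonneg (Finset.filter_subset _ _)
            (fun p _ _ => hfnn _)
    have hm1 : (1:ℝ) ≤ m := by
      have : (k:ℝ) * l / ε > 0 := by positivity
      by_contra hc
      push_neg at hc
      have hm0 : m = 0 := by
        by_contra h0
        have : (1:ℝ) ≤ m := by exact_mod_cast Nat.one_le_iff_ne_zero.2 h0
        linarith
      rw [hm0] at hm
      norm_num at hm
      nlinarith
    have hKsum : ∑ p ∈ Finset.univ.offDiag, K (w p.1) (w p.2)
        = l * (∑ p ∈ Finset.univ.offDiag,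
            f ⟪(w p.1 : EuclideanSpace ℝ (Fin n)), (w p.2 : EuclideanSpace ℝ (Fin n))⟫)
          - ((m:ℝ)^2 - m) := by
      have hcardoff : ((Finset.univ.offDiag : Finset (Fin m × Fin m)).card : ℝ)
          = (m:ℝ)^2 - m := by
        rw [Finset.offDiag_card, Finset.card_univ, Fintype.card_fin]
        have hmm : m ≤ m * m := Nat.le_mul_of_pos_left m (by
          have : (0:ℝ) < m := by linarith
          exact_mod_cast this)
        rw [Nat.cast_sub hmm]
        push_cast
        ring
      rw [← hcardoff]
      rw [Finset.sum_sub_distrib, ← Finset.mul_sum, Finset.sum_const, nsmul_eq_mul, mul_one]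
    rw [hKsum]
    -- numeric conclusion
    have hkC : (m:ℝ)^2 - k * m ≤ k * C := by
      have h2 : ((m:ℝ)^2 / k - m) * k ≤ C * k :=
        mul_le_mul_of_nonneg_right hTuran hk0.le
      rw [sub_mul, div_mul_cancel₀ _ (ne_of_gt hk0)] at h2
      nlinarith
    have hεm : (k:ℝ) * l ≤ ε * m := by
      have := (div_le_iff₀ hε).1 hm
      linarith
    have hCf : l * C ≤ l * (∑ p ∈ Finset.univ.offDiag,
        f ⟪(w p.1 : EuclideanSpace ℝ (Fin n)), (w p.2 : EuclideanSpace ℝ (Fin n))⟫) :=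
      mul_le_mul_of_nonneg_left hfsum hlpos.le
    have hm0 : (0:ℝ) ≤ m := by linarith
    have h1 : (k:ℝ) * l * m ≤ ε * m * m := mul_le_mul_of_nonneg_right hεm hm0
    rw [hl] at h1
    have h3 : ε * ((m:ℝ)^2 - k * m) ≤ ε * (k * C) := mul_le_mul_of_nonneg_left hkC hε.le
    have hεC : (k:ℝ) * m ≤ ε * C := by
      have h2 : (k:ℝ) * ((k:ℝ) * m) ≤ (k:ℝ) * (ε * C) := by nlinarith [h3, h1]
      exact le_of_mul_le_mul_left h2 hk0
    have hlC : l * C = (k:ℝ) * C + ε * C := by rw [hl]; ring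
    linarith
  -- choose r₀
  refine ⟨⌈(k:ℝ) * l / ε⌉₊, fun r hr => ?_⟩
  have hmr : (k:ℝ) * l / ε ≤ (2 + r : ℕ) := by
    calc (k:ℝ) * l / ε ≤ ⌈(k:ℝ) * l / ε⌉₊ := Nat.le_ceil _
      _ ≤ (r:ℝ) := by exact_mod_cast hr
      _ ≤ ((2 + r : ℕ) : ℝ) := by push_cast; linarith
  have hne01 : (Fin.castAdd r (0 : Fin 2)) ≠ (Fin.castAdd r (1 : Fin 2)) := by
    intro h
    have := congrArg Fin.val h
    simp [Fin.coe_castAdd] at this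
  set N := tsym (2+r) (stk 2 r (kerTensor K)) with hN
  have hNnn : ∀ v, 0 ≤ N v := by
    intro v
    have hperm := perm_sum_nonneg (2+r) K (hcore (2+r) hmr) v
      (Fin.castAdd r (0 : Fin 2)) (Fin.castAdd r (1 : Fin 2)) hne01
    show 0 ≤ ((2+r).factorial : ℝ)⁻¹ * ∑ π : Equiv.Perm (Fin (2+r)),
      stk 2 r (kerTensor K) (v ∘ π)
    have heq : ∀ π : Equiv.Perm (Fin (2+r)), stk 2 r (kerTensor K) (v ∘ π)
        = K (v (π (Fin.castAdd r (0 : Fin 2)))) (v (π (Fin.castAdd r (1 : Fin 2)))) :=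
      fun π => rfl
    rw [Finset.sum_congr rfl (fun π _ => heq π)]
    exact mul_nonneg (inv_nonneg.2 (Nat.cast_nonneg _)) hperm
  have hmemC : memCr r K := ⟨hker, N, hNnn, (tsym_tsym (2+r) _).symm⟩
  have hxmem : ((l : ℝ) : EReal) ∈ {x : EReal | ∃ l' : ℝ, x = (l' : EReal) ∧
      ∃ K' : ↥(Sphere n) → ↥(Sphere n) → ℝ, memCr r K' ∧
        (∀ v, K' v v = l' - 1) ∧
        ∀ u v : ↥(Sphere n),
          ⟪(u : EuclideanSpace ℝ (Fin n)), (v : EuclideanSpace ℝ (Fin n))⟫ ≤ 1 / 2 →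
          K' u v = -1} := ⟨l, rfl, K, hmemC, hdiag, hneg⟩
  have := sInf_le hxmem
  rw [hl] at this
  exact this

end Upper


lemma memCr_memQr {X : Type*} [TopologicalSpace X] {r : ℕ} {K : X → X → ℝ}
    (h : memCr r K) : memQr r K := by
  obtain ⟨hk, N, hN, heq⟩ := h
  refine ⟨hk, N, fun _ => 0, hN, ⟨continuous_const, fun z => ?_⟩, ?_⟩
  · intro m v x
    simp
  · funext v
    rw [heq]
    have hz : tsym (2+r) (fun _ : Fin (2+r) → X => (0:ℝ)) v = 0 := by
      unfold tsym
      simp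
    rw [hz, add_zero]

/-- the sequences `(γ_r(G_n))_r` and `(ν_r(G_n))_r` are
nonincreasing and both converge to the kissing number `κ_n`. -/
theorem stmt11 (n : ℕ) (hn : 2 ≤ n) :
    Antitone (fun r => gammaSph n r) ∧
    Tendsto (fun r => gammaSph n r) atTop
      (𝓝 ((kissingNumber n : ℝ) : EReal)) ∧
    Antitone (fun r => nuSph n r) ∧
    Tendsto (fun r => nuSph n r) atTop
      (𝓝 ((kissingNumber n : ℝ) : EReal)) := by
  have hg_anti : Antitone (fun r => gammaSph n r) := by
    apply antitone_nat_of_succ_le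
    intro r
    apply sInf_le_sInf
    rintro x ⟨l, hx, K, hmem, h1, h2⟩
    exact ⟨l, hx, K, memCr_succ hmem, h1, h2⟩
  have hnu_anti : Antitone (fun r => nuSph n r) := by
    apply antitone_nat_of_succ_le
    intro r
    apply sInf_le_sInf
    rintro x ⟨l, hx, K, hmem, h1, h2⟩
    exact ⟨l, hx, K, memQr_succ hmem, h1, h2⟩
  have hlow : ∀ r, ((kissingNumber n : ℝ) : EReal) ≤ nuSph n r := by
    intro r
    apply le_sInf
    rintro x ⟨l, rfl, K, hmem, h1, h2⟩
    exact_mod_cast memQr_lower_bound hn l K hmem h1 h2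
  have hnu_le_gamma : ∀ r, nuSph n r ≤ gammaSph n r := by
    intro r
    apply sInf_le_sInf
    rintro x ⟨l, hx, K, hmem, h1, h2⟩
    exact ⟨l, hx, K, memCr_memQr hmem, h1, h2⟩
  have hglow : ∀ r, ((kissingNumber n : ℝ) : EReal) ≤ gammaSph n r :=
    fun r => (hlow r).trans (hnu_le_gamma r)
  have hupper := gamma_le_of_large hn
  have htendg : Tendsto (fun r => gammaSph n r) atTop
      (𝓝 ((kissingNumber n : ℝ) : EReal)) := by
    rw [tendsto_order]
    constructor
    · intro b hb
      exact Eventually.of_forall (fun r => lt_of_lt_of_le hb (hglow r))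
    · intro b hb
      obtain ⟨x, hx1, hx2⟩ := EReal.lt_iff_exists_real_btwn.1 hb
      have hx1' : (kissingNumber n : ℝ) < x := by exact_mod_cast hx1
      obtain ⟨r₀, hr₀⟩ := hupper (x - kissingNumber n) (by linarith)
      refine eventually_atTop.2 ⟨r₀, fun r hr => lt_of_le_of_lt ?_ hx2⟩
      have h' := hr₀ r hr
      rwa [show (kissingNumber n : ℝ) + (x - kissingNumber n) = x by ring] at h'
  have htendn : Tendsto (fun r => nuSph n r) atTop
      (𝓝 ((kissingNumber n : ℝ) : EReal)) :=
    tendsto_of_tendsto_of_tendsto_of_le_of_le tendsto_const_nhds htendg hlow hnu_le_gamma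
  exact ⟨hg_anti, htendg, hnu_anti, htendn⟩
end
end

section
/- For every n ≥ 2 there exist λ ∈ ℝ and a kernel M on S^{n-1} such that M ∈ int COP(S^{n-1}), M(x,x) = λ − 1 for all x ∈ S^{n-1}, and M(x,y) = −1 for all x, y ∈ S^{n-1} with ⟨x,y⟩ ≤ 1/2. (That is, the copositive formulation of the kissing number problem is strictly feasible.) -/
noncomputable section

open Filter Topology RealInnerProductSpace

/-- The space of kernels on `S^{n-1}`, i.e. symmetric continuous functions on
`S^{n-1} × S^{n-1}`, with the topology of `C(S^{n-1} × S^{n-1}, ℝ)` (which is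
the supremum-norm topology since the sphere is compact). -/
def SphKernelSpace (n : ℕ) : Type _ :=
  {K : C(↥(Sphere n) × ↥(Sphere n), ℝ) // ∀ x y, K (x, y) = K (y, x)}

instance (n : ℕ) : TopologicalSpace (SphKernelSpace n) :=
  instTopologicalSpaceSubtype

/-- `COP(S^{n-1})` as a subset of the space of kernels on the sphere. -/
def sphCOPSet (n : ℕ) : Set (SphKernelSpace n) :=
  {K | IsCopositiveKernel fun x y => K.1 (x, y)}

lemma aux_close_inner {E : Type*} [NormedAddCommGroup E] [InnerProductSpace ℝ E]
    (x y z : E) (hx : ‖x‖ = 1) (hy : ‖y‖ = 1) (hz : ‖z‖ = 1)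
    (ha : (9:ℝ)/10 < ⟪x, z⟫) (hb : (9:ℝ)/10 < ⟪y, z⟫) :
    (1:ℝ)/2 < ⟪x, y⟫ := by
  set a : ℝ := ⟪x, z⟫ with ha'
  set b : ℝ := ⟪y, z⟫ with hb'
  have ha1 : a ≤ 1 := by
    have := real_inner_le_norm x z; rw [hx, hz] at this; simpa using this
  have hb1 : b ≤ 1 := by
    have := real_inner_le_norm y z; rw [hy, hz] at this; simpa using this
  set u : E := x - a • z with hu'
  set v : E := y - b • z with hv'
  have hzz : ⟪z, z⟫ = 1 := by
    rw [real_inner_self_eq_norm_sq, hz]; norm_num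
  have hnsm : ∀ c : ℝ, ‖c • z‖^2 = c^2 := by
    intro c
    rw [norm_smul, hz, mul_one, Real.norm_eq_abs, sq_abs]
  have hu2 : ‖u‖^2 = 1 - a^2 := by
    rw [hu', @norm_sub_sq_real, hx, real_inner_smul_right, ← ha', hnsm]
    ring
  have hv2 : ‖v‖^2 = 1 - b^2 := by
    rw [hv', @norm_sub_sq_real, hy, real_inner_smul_right, ← hb', hnsm]
    ring
  have huv : ⟪u, v⟫ = ⟪x, y⟫ - a * b := by
    rw [hu', hv', inner_sub_left, inner_sub_right, inner_sub_right,
      real_inner_smul_right, real_inner_smul_left, real_inner_smul_left,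
      real_inner_smul_right, hzz]
    have hzy : ⟪z, y⟫ = b := by rw [hb']; exact real_inner_comm y z
    rw [hzy, ← ha']
    ring
  have hcs : -(‖u‖ * ‖v‖) ≤ ⟪u, v⟫ := neg_le_of_abs_le (abs_real_inner_le_norm u v)
  have hun : (0:ℝ) ≤ ‖u‖ := norm_nonneg u
  have hvn : (0:ℝ) ≤ ‖v‖ := norm_nonneg v
  nlinarith [sq_nonneg (‖u‖ * ‖v‖ - 19/100), sq_nonneg (‖u‖ - ‖v‖), mul_nonneg hun hvn,
    sq_nonneg (a - b), sq_nonneg (a*b - 81/100)]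


lemma sphere_cover (n : ℕ) : ∃ T : Finset ↥(Sphere n), ∀ x : ↥(Sphere n), ∃ z ∈ T,
    (19:ℝ)/20 < ⟪(x : EuclideanSpace ℝ (Fin n)), (z : EuclideanSpace ℝ (Fin n))⟫ := by
  have hc : IsCompact (Sphere n) := isCompact_sphere 0 1
  have hopen : ∀ z : ↥(Sphere n),
      IsOpen {x : EuclideanSpace ℝ (Fin n) | (19:ℝ)/20 < ⟪x, (z : EuclideanSpace ℝ (Fin n))⟫} :=
    fun z => isOpen_lt continuous_const (Continuous.inner continuous_id continuous_const)
  have hcov : Sphere n ⊆ ⋃ z : ↥(Sphere n),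
      {x : EuclideanSpace ℝ (Fin n) | (19:ℝ)/20 < ⟪x, (z : EuclideanSpace ℝ (Fin n))⟫} := by
    intro x hx
    refine Set.mem_iUnion.2 ⟨⟨x, hx⟩, ?_⟩
    have hx1 : ‖x‖ = 1 := by simpa [mem_sphere_zero_iff_norm] using hx
    simp only [Set.mem_setOf_eq]
    rw [real_inner_self_eq_norm_sq, hx1]
    norm_num
  obtain ⟨T, hT⟩ := hc.elim_finite_subcover _ hopen hcov
  refine ⟨T, fun x => ?_⟩
  have hm := hT x.2
  rw [Set.mem_iUnion₂] at hm
  obtain ⟨z, hzT, hz⟩ := hm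
  exact ⟨z, hzT, hz⟩

lemma lemma_F (n : ℕ) (hn : 2 ≤ n) :
    ∃ (Z : Finset ↥(Sphere n)) (F : ↥(Sphere n) → ↥(Sphere n) → ℝ)
      (cl : ↥(Sphere n) → ↥(Sphere n)),
      Z.Nonempty ∧
      Continuous (fun p : ↥(Sphere n) × ↥(Sphere n) => F p.1 p.2) ∧
      (∀ x y, F x y = F y x) ∧
      (∀ x y, 0 ≤ F x y) ∧
      (∀ x y, F x y ≤ (Z.card : ℝ)) ∧
      (∀ x, (1:ℝ)/400 ≤ F x x) ∧
      (∀ x y : ↥(Sphere n),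
        ⟪(x : EuclideanSpace ℝ (Fin n)), (y : EuclideanSpace ℝ (Fin n))⟫ ≤ 1/2 → F x y = 0) ∧
      (∀ x, cl x ∈ Z) ∧
      (∀ x y, cl x = cl y → (1:ℝ)/400 ≤ F x y) := by
  classical
  obtain ⟨T, hT⟩ := sphere_cover n
  have hx₀ : (EuclideanSpace.single (⟨0, by omega⟩ : Fin n) (1:ℝ)) ∈ Sphere n := by
    simp [mem_sphere_zero_iff_norm, EuclideanSpace.norm_single]
  have hTne : T.Nonempty := by
    obtain ⟨z, hz, -⟩ := hT ⟨_, hx₀⟩; exact ⟨z, hz⟩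
  set h : ℝ → ℝ := fun t => max (t - 9/10) 0 with hhdef
  have hcont : Continuous h := (continuous_id.sub continuous_const).max continuous_const
  have h_nonneg : ∀ t, 0 ≤ h t := fun t => le_max_right _ _
  have h_pos : ∀ t : ℝ, h t ≠ 0 → 9/10 < t := by
    intro t ht
    by_contra hc
    push_neg at hc
    exact ht (max_eq_right (by linarith))
  have h_le : ∀ t : ℝ, t ≤ 1 → h t ≤ 1 := fun t ht => max_le (by linarith) (by norm_num)
  have h_ge : ∀ t : ℝ, 19/20 < t → 1/20 ≤ h t :=
    fun t ht => le_trans (by linarith : (1:ℝ)/20 ≤ t - 9/10) (le_max_left _ _)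
  have hnorm : ∀ x : ↥(Sphere n), ‖(x : EuclideanSpace ℝ (Fin n))‖ = 1 := by
    intro x
    have := x.2
    rwa [mem_sphere_zero_iff_norm] at this
  have hinle : ∀ x y : ↥(Sphere n),
      ⟪(x : EuclideanSpace ℝ (Fin n)), (y : EuclideanSpace ℝ (Fin n))⟫ ≤ 1 := by
    intro x y
    have := real_inner_le_norm (x : EuclideanSpace ℝ (Fin n)) (y : EuclideanSpace ℝ (Fin n))
    rw [hnorm, hnorm] at this
    simpa using this
  set F : ↥(Sphere n) → ↥(Sphere n) → ℝ := fun x y =>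
    ∑ z ∈ T, h ⟪(x : EuclideanSpace ℝ (Fin n)), (z : EuclideanSpace ℝ (Fin n))⟫ *
      h ⟪(y : EuclideanSpace ℝ (Fin n)), (z : EuclideanSpace ℝ (Fin n))⟫ with hFdef
  have hFsymm : ∀ x y, F x y = F y x := by
    intro x y
    exact Finset.sum_congr rfl fun z _ => by ring
  have hFnn : ∀ x y, 0 ≤ F x y :=
    fun x y => Finset.sum_nonneg fun z _ => mul_nonneg (h_nonneg _) (h_nonneg _)
  have hFub : ∀ x y, F x y ≤ (T.card : ℝ) := by
    intro x y
    calc F x y ≤ ∑ _z ∈ T, (1:ℝ) :=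
          Finset.sum_le_sum fun z _ =>
            mul_le_one₀ (h_le _ (hinle x z)) (h_nonneg _) (h_le _ (hinle y z))
      _ = (T.card : ℝ) := by simp
  have hFnear : ∀ (x y : ↥(Sphere n)), ∀ z ∈ T,
      (19:ℝ)/20 < ⟪(x : EuclideanSpace ℝ (Fin n)), (z : EuclideanSpace ℝ (Fin n))⟫ →
      (19:ℝ)/20 < ⟪(y : EuclideanSpace ℝ (Fin n)), (z : EuclideanSpace ℝ (Fin n))⟫ →
      (1:ℝ)/400 ≤ F x y := by
    intro x y z hzT hxz hyz
    have h1 := h_ge _ hxz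
    have h2 := h_ge _ hyz
    have hterm : (1:ℝ)/400 ≤ h ⟪(x : EuclideanSpace ℝ (Fin n)), (z : EuclideanSpace ℝ (Fin n))⟫ *
        h ⟪(y : EuclideanSpace ℝ (Fin n)), (z : EuclideanSpace ℝ (Fin n))⟫ := by nlinarith
    refine le_trans hterm ?_
    rw [hFdef]
    exact Finset.single_le_sum
      (f := fun w : ↥(Sphere n) =>
        h ⟪(x : EuclideanSpace ℝ (Fin n)), (w : EuclideanSpace ℝ (Fin n))⟫ *
        h ⟪(y : EuclideanSpace ℝ (Fin n)), (w : EuclideanSpace ℝ (Fin n))⟫)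
      (fun w _ => mul_nonneg (h_nonneg _) (h_nonneg _)) hzT
  have hFdiag : ∀ x, (1:ℝ)/400 ≤ F x x := by
    intro x
    obtain ⟨z, hzT, hz⟩ := hT x
    exact hFnear x x z hzT hz hz
  have hFfar : ∀ x y : ↥(Sphere n),
      ⟪(x : EuclideanSpace ℝ (Fin n)), (y : EuclideanSpace ℝ (Fin n))⟫ ≤ 1/2 → F x y = 0 := by
    intro x y hxy
    apply Finset.sum_eq_zero
    intro z _
    by_contra hne
    have h1 : h ⟪(x : EuclideanSpace ℝ (Fin n)), (z : EuclideanSpace ℝ (Fin n))⟫ ≠ 0 :=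
      fun h0 => hne (by rw [h0, zero_mul])
    have h2 : h ⟪(y : EuclideanSpace ℝ (Fin n)), (z : EuclideanSpace ℝ (Fin n))⟫ ≠ 0 :=
      fun h0 => hne (by rw [h0, mul_zero])
    have := aux_close_inner (x : EuclideanSpace ℝ (Fin n)) (y : EuclideanSpace ℝ (Fin n))
      (z : EuclideanSpace ℝ (Fin n)) (hnorm x) (hnorm y) (hnorm z) (h_pos _ h1) (h_pos _ h2)
    linarith
  have hFc : Continuous fun p : ↥(Sphere n) × ↥(Sphere n) => F p.1 p.2 := by
    apply continuous_finset_sum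
    intro z _
    exact (hcont.comp (Continuous.inner (continuous_subtype_val.comp continuous_fst)
        continuous_const)).mul
      (hcont.comp (Continuous.inner (continuous_subtype_val.comp continuous_snd)
        continuous_const))
  refine ⟨T, F, fun p => (hT p).choose, hTne, hFc, hFsymm, hFnn, hFub, hFdiag, hFfar,
    fun p => (hT p).choose_spec.1, ?_⟩
  intro x y hxy
  have hxy' : (hT x).choose = (hT y).choose := hxy
  have hx := (hT x).choose_spec.2
  rw [hxy'] at hx
  exact hFnear x y _ (hT y).choose_spec.1 hx (hT y).choose_spec.2

lemma lemma_G (n : ℕ) (Z : Finset ↥(Sphere n)) (F : ↥(Sphere n) → ↥(Sphere n) → ℝ)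
    (cl : ↥(Sphere n) → ↥(Sphere n))
    (hZ : Z.Nonempty)
    (hFc : Continuous (fun p : ↥(Sphere n) × ↥(Sphere n) => F p.1 p.2))
    (hFsymm : ∀ x y, F x y = F y x)
    (hFnn : ∀ x y, 0 ≤ F x y)
    (hFub : ∀ x y, F x y ≤ (Z.card : ℝ))
    (hFdiag : ∀ x, (1:ℝ)/400 ≤ F x x)
    (hFfar : ∀ x y : ↥(Sphere n),
      ⟪(x : EuclideanSpace ℝ (Fin n)), (y : EuclideanSpace ℝ (Fin n))⟫ ≤ 1/2 → F x y = 0)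
    (hclZ : ∀ x, cl x ∈ Z)
    (hFnear : ∀ x y, cl x = cl y → (1:ℝ)/400 ≤ F x y) :
    ∃ (A : ℝ) (G : ↥(Sphere n) → ↥(Sphere n) → ℝ),
      0 < A ∧
      Continuous (fun p : ↥(Sphere n) × ↥(Sphere n) => G p.1 p.2) ∧
      (∀ x y, G x y = G y x) ∧
      (∀ x, G x x = 1) ∧
      (∀ x y : ↥(Sphere n),
        ⟪(x : EuclideanSpace ℝ (Fin n)), (y : EuclideanSpace ℝ (Fin n))⟫ ≤ 1/2 → G x y = 0) ∧
      ∀ (k : ℕ) (v : Fin k → ↥(Sphere n)) (x : Fin k → ℝ), (∀ i, 0 ≤ x i) →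
        2 * (∑ i, x i)^2 ≤ ∑ i, ∑ j, (A * G (v i) (v j) - 1) * x i * x j := by
  classical
  set m : ℝ := (Z.card : ℝ) with hm
  have hm1 : 1 ≤ m := by
    have h1 : 1 ≤ Z.card := Finset.card_pos.mpr hZ
    rw [hm]
    exact_mod_cast h1
  have hm0 : (0:ℝ) < m := by linarith
  have hFdiag0 : ∀ x, (0:ℝ) < F x x := fun x => lt_of_lt_of_le (by norm_num) (hFdiag x)
  have hd : ∀ x y, (0:ℝ) < F x x * F y y := fun x y => mul_pos (hFdiag0 x) (hFdiag0 y)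
  set G : ↥(Sphere n) → ↥(Sphere n) → ℝ := fun x y => (F x y)^2 / (F x x * F y y) with hGdef
  have hGnn : ∀ x y, 0 ≤ G x y := fun x y => div_nonneg (sq_nonneg _) (hd x y).le
  have hGsymm : ∀ x y, G x y = G y x := by
    intro x y
    simp only [hGdef]
    rw [hFsymm x y, mul_comm]
  have hGdiag : ∀ x, G x x = 1 := by
    intro x
    simp only [hGdef]
    rw [← pow_two]
    exact div_self (pow_ne_zero 2 (hFdiag0 x).ne')
  have hGfar : ∀ x y : ↥(Sphere n),
      ⟪(x : EuclideanSpace ℝ (Fin n)), (y : EuclideanSpace ℝ (Fin n))⟫ ≤ 1/2 → G x y = 0 := by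
    intro x y hxy
    simp only [hGdef]
    rw [hFfar x y hxy]
    simp
  set γ : ℝ := ((1:ℝ)/400)^2 / (m * m) with hγdef
  have hγpos : 0 < γ := div_pos (by norm_num) (mul_pos hm0 hm0)
  have hGnear : ∀ x y, cl x = cl y → γ ≤ G x y := by
    intro x y hcl
    have hF := hFnear x y hcl
    simp only [hGdef, hγdef]
    rw [div_le_div_iff₀ (mul_pos hm0 hm0) (hd x y)]
    have e1 : F x x * F y y ≤ m * m :=
      mul_le_mul (hFub x x) (hFub y y) (hFnn y y) (by linarith)
    have e2 : ((1:ℝ)/400)^2 ≤ (F x y)^2 := by nlinarith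
    nlinarith [hd x y, sq_nonneg (F x y)]
  set A : ℝ := 3 * m / γ with hAdef
  have hApos : 0 < A := div_pos (by linarith) hγpos
  have hAγ : A * (γ / m) = 3 := by
    rw [hAdef, div_mul_div_comm, show 3 * m * γ = 3 * (γ * m) by ring, mul_div_assoc,
      div_self (mul_pos hγpos hm0).ne']
    ring
  have hGc : Continuous fun p : ↥(Sphere n) × ↥(Sphere n) => G p.1 p.2 := by
    apply Continuous.div
    · exact hFc.pow 2
    · exact (hFc.comp (continuous_fst.prodMk continuous_fst)).mul
        (hFc.comp (continuous_snd.prodMk continuous_snd))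
    · intro p
      exact (hd p.1 p.2).ne'
  refine ⟨A, G, hApos, hGc, hGsymm, hGdiag, hGfar, ?_⟩
  intro k v x hx
  set s : ↥(Sphere n) → ℝ :=
    fun z => ∑ i ∈ Finset.univ.filter (fun i => cl (v i) = z), x i with hs
  have hsum : ∑ i, x i = ∑ z ∈ Z, s z :=
    (Finset.sum_fiberwise_of_maps_to (fun i _ => hclZ (v i)) x).symm
  have hCS : (∑ i, x i)^2 ≤ m * ∑ z ∈ Z, (s z)^2 := by
    rw [hsum, hm]
    exact sq_sum_le_card_mul_sum_sq
  have hfib : ∀ z ∈ Z, γ * (s z)^2 ≤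
      ∑ i ∈ Finset.univ.filter (fun i => cl (v i) = z),
        ∑ j ∈ Finset.univ.filter (fun i => cl (v i) = z), G (v i) (v j) * x i * x j := by
    intro z hz
    simp only [hs]
    rw [sq, Finset.sum_mul_sum, Finset.mul_sum]
    apply Finset.sum_le_sum
    intro i hi
    rw [Finset.mul_sum]
    apply Finset.sum_le_sum
    intro j hj
    have hiz : cl (v i) = z := (Finset.mem_filter.mp hi).2
    have hjz : cl (v j) = z := (Finset.mem_filter.mp hj).2
    have hγG : γ ≤ G (v i) (v j) := hGnear (v i) (v j) (hiz.trans hjz.symm)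
    have hxij : 0 ≤ x i * x j := mul_nonneg (hx i) (hx j)
    calc γ * (x i * x j) ≤ G (v i) (v j) * (x i * x j) :=
          mul_le_mul_of_nonneg_right hγG hxij
      _ = G (v i) (v j) * x i * x j := by ring
  have htriple : ∑ z ∈ Z, ∑ i ∈ Finset.univ.filter (fun i => cl (v i) = z),
        ∑ j ∈ Finset.univ.filter (fun i => cl (v i) = z), G (v i) (v j) * x i * x j
      ≤ ∑ i, ∑ j, G (v i) (v j) * x i * x j := by
    have step : ∀ z ∈ Z, ∑ i ∈ Finset.univ.filter (fun i => cl (v i) = z),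
          ∑ j ∈ Finset.univ.filter (fun i => cl (v i) = z), G (v i) (v j) * x i * x j
        ≤ ∑ i ∈ Finset.univ.filter (fun i => cl (v i) = z),
          ∑ j, G (v i) (v j) * x i * x j := by
      intro z _
      apply Finset.sum_le_sum
      intro i _
      apply Finset.sum_le_sum_of_subset_of_nonneg (Finset.filter_subset _ _)
      intro j _ _
      exact mul_nonneg (mul_nonneg (hGnn _ _) (hx i)) (hx j)
    calc ∑ z ∈ Z, ∑ i ∈ Finset.univ.filter (fun i => cl (v i) = z),
          ∑ j ∈ Finset.univ.filter (fun i => cl (v i) = z), G (v i) (v j) * x i * x j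
        ≤ ∑ z ∈ Z, ∑ i ∈ Finset.univ.filter (fun i => cl (v i) = z),
          ∑ j, G (v i) (v j) * x i * x j := Finset.sum_le_sum step
      _ = ∑ i, ∑ j, G (v i) (v j) * x i * x j :=
          Finset.sum_fiberwise_of_maps_to (fun i _ => hclZ (v i))
            (fun i => ∑ j, G (v i) (v j) * x i * x j)
  have t1 : γ * ∑ z ∈ Z, (s z)^2 ≤ ∑ i, ∑ j, G (v i) (v j) * x i * x j := by
    rw [Finset.mul_sum]
    exact le_trans (Finset.sum_le_sum hfib) htriple
  have hGsum : γ / m * (∑ i, x i)^2 ≤ ∑ i, ∑ j, G (v i) (v j) * x i * x j := by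
    have t2 : γ * (∑ i, x i)^2 ≤ γ * (m * ∑ z ∈ Z, (s z)^2) :=
      mul_le_mul_of_nonneg_left hCS hγpos.le
    rw [div_mul_eq_mul_div, div_le_iff₀ hm0]
    nlinarith [mul_le_mul_of_nonneg_left t1 hm0.le]
  have expand : ∑ i, ∑ j, (A * G (v i) (v j) - 1) * x i * x j
      = A * (∑ i, ∑ j, G (v i) (v j) * x i * x j) - (∑ i, x i)^2 := by
    rw [sq, Finset.sum_mul_sum, Finset.mul_sum, ← Finset.sum_sub_distrib]
    apply Finset.sum_congr rfl
    intro i _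
    rw [Finset.mul_sum, ← Finset.sum_sub_distrib]
    apply Finset.sum_congr rfl
    intro j _
    ring
  rw [expand]
  have t3 : A * (γ / m * (∑ i, x i)^2) ≤ A * (∑ i, ∑ j, G (v i) (v j) * x i * x j) :=
    mul_le_mul_of_nonneg_left hGsum hApos.le
  have t4 : A * (γ / m * (∑ i, x i)^2) = 3 * (∑ i, x i)^2 := by
    rw [← mul_assoc, hAγ]
  linarith

set_option maxHeartbeats 1000000 in
/-- the copositive formulation of the kissing number problem is
strictly feasible: there are `λ ∈ ℝ` and a kernel `M ∈ int COP(S^{n-1})` with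
`M(x,x) = λ - 1` and `M(x,y) = -1` whenever `⟪x,y⟫ ≤ 1/2`. -/
theorem stmt12 (n : ℕ) (hn : 2 ≤ n) :
    ∃ (l : ℝ) (M : SphKernelSpace n),
      M ∈ interior (sphCOPSet n) ∧
      (∀ x : ↥(Sphere n), M.1 (x, x) = l - 1) ∧
      ∀ x y : ↥(Sphere n),
        ⟪(x : EuclideanSpace ℝ (Fin n)), (y : EuclideanSpace ℝ (Fin n))⟫ ≤ 1 / 2 →
        M.1 (x, y) = -1 := by
  classical
  obtain ⟨Z, F, cl, hZ, hFc, hFsymm, hFnn, hFub, hFdiag, hFfar, hclZ, hFnear⟩ := lemma_F n hn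
  obtain ⟨A, G, hApos, hGc, hGsymm, hGdiag, hGfar, key⟩ :=
    lemma_G n Z F cl hZ hFc hFsymm hFnn hFub hFdiag hFfar hclZ hFnear
  set Mfun : C(↥(Sphere n) × ↥(Sphere n), ℝ) :=
    ⟨fun p => A * G p.1 p.2 - 1, ((continuous_const.mul hGc).sub continuous_const)⟩ with hMfun
  set M : SphKernelSpace n := ⟨Mfun, by
    intro x y
    simp only [hMfun, ContinuousMap.coe_mk]
    rw [hGsymm x y]⟩ with hM
  refine ⟨A, M, ?_, ?_, ?_⟩
  · -- interior
    rw [mem_interior]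
    refine ⟨{K : SphKernelSpace n | dist K.1 Mfun < 1}, ?_, ?_, ?_⟩
    · intro K hK
      simp only [Set.mem_setOf_eq] at hK
      intro k v x hx
      have hMkey := key k v x hx
      have hterm : ∀ i j, (Mfun (v i, v j) - 1) * (x i * x j) ≤ K.1 (v i, v j) * x i * x j := by
        intro i j
        have h1 : dist (K.1 (v i, v j)) (Mfun (v i, v j)) ≤ dist K.1 Mfun :=
          ContinuousMap.dist_apply_le_dist _
        have h2 : Mfun (v i, v j) - 1 ≤ K.1 (v i, v j) := by
          rw [Real.dist_eq] at h1
          have := abs_le.mp (le_of_lt (lt_of_le_of_lt h1 hK))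
          linarith [this.1]
        calc (Mfun (v i, v j) - 1) * (x i * x j)
            ≤ K.1 (v i, v j) * (x i * x j) :=
              mul_le_mul_of_nonneg_right h2 (mul_nonneg (hx i) (hx j))
          _ = K.1 (v i, v j) * x i * x j := by ring
      have hsumle : ∑ i, ∑ j, (Mfun (v i, v j) - 1) * (x i * x j)
          ≤ ∑ i, ∑ j, K.1 (v i, v j) * x i * x j :=
        Finset.sum_le_sum fun i _ => Finset.sum_le_sum fun j _ => hterm i j
      have hexp : ∑ i, ∑ j, (Mfun (v i, v j) - 1) * (x i * x j)
          = (∑ i, ∑ j, (A * G (v i) (v j) - 1) * x i * x j) - (∑ i, x i)^2 := by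
        rw [sq, Finset.sum_mul_sum, ← Finset.sum_sub_distrib]
        apply Finset.sum_congr rfl
        intro i _
        rw [← Finset.sum_sub_distrib]
        apply Finset.sum_congr rfl
        intro j _
        simp only [hMfun, ContinuousMap.coe_mk]
        ring
      nlinarith [sq_nonneg (∑ i, x i)]
    · have : {K : SphKernelSpace n | dist K.1 Mfun < 1}
          = Subtype.val ⁻¹' (Metric.ball Mfun 1) := by
        ext K
        exact Iff.rfl
      rw [this]
      exact Metric.isOpen_ball.preimage continuous_subtype_val
    · simp only [Set.mem_setOf_eq, hM]
      show dist Mfun Mfun < 1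
      rw [dist_self]
      exact one_pos
  · intro x
    simp only [hM, hMfun, ContinuousMap.coe_mk]
    rw [hGdiag x]
    ring
  · intro x y hxy
    simp only [hM, hMfun, ContinuousMap.coe_mk]
    rw [hGfar x y hxy]
    ring
end
end

section
/- For every n ≥ 2 and every r ∈ ℕ, γ_r(G_n) > κ_n, where the inequality is strict in ℝ ∪ {+∞} (in particular it holds when γ_r(G_n) = +∞, i.e. when the defining program is infeasible). -/
noncomputable section

open Filter Topology RealInnerProductSpace

section Aux

open Finset

private lemma exists_perm_two {m : ℕ} {i₀ i₁ a b : Fin m} (h01 : i₀ ≠ i₁) (hab : a ≠ b) :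
    ∃ ρ : Equiv.Perm (Fin m), ρ i₀ = a ∧ ρ i₁ = b := by
  set b' := (Equiv.swap i₀ a) i₁ with hb'
  have hab' : a ≠ b' := by
    intro h
    apply h01
    have h2 := congrArg (Equiv.swap i₀ a) h
    rw [hb', Equiv.swap_apply_self, Equiv.swap_apply_right] at h2
    exact h2
  refine ⟨(Equiv.swap b' b) * (Equiv.swap i₀ a), ?_, ?_⟩
  · rw [Equiv.Perm.mul_apply, Equiv.swap_apply_left,
      Equiv.swap_apply_of_ne_of_ne hab' hab]
  · rw [Equiv.Perm.mul_apply, ← hb', Equiv.swap_apply_left]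

private lemma fiber_card_const {m : ℕ} {i₀ i₁ : Fin m} (h01 : i₀ ≠ i₁) {a b : Fin m}
    (hab : a ≠ b) :
    (Finset.univ.filter fun π : Equiv.Perm (Fin m) => (π i₀, π i₁) = (a, b)).card
      = (Finset.univ.filter fun π : Equiv.Perm (Fin m) => (π i₀, π i₁) = (i₀, i₁)).card := by
  obtain ⟨ρ, hρ0, hρ1⟩ := exists_perm_two h01 hab
  refine Finset.card_bij' (fun π _ => ρ⁻¹ * π) (fun π _ => ρ * π) ?_ ?_ ?_ ?_
  · intro π hπ
    simp only [Finset.mem_filter, Finset.mem_univ, true_and, Prod.mk.injEq] at hπ ⊢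
    obtain ⟨h1, h2⟩ := hπ
    constructor
    · rw [Equiv.Perm.mul_apply, h1, ← hρ0, Equiv.Perm.inv_def, Equiv.symm_apply_apply]
    · rw [Equiv.Perm.mul_apply, h2, ← hρ1, Equiv.Perm.inv_def, Equiv.symm_apply_apply]
  · intro π hπ
    simp only [Finset.mem_filter, Finset.mem_univ, true_and, Prod.mk.injEq] at hπ ⊢
    obtain ⟨h1, h2⟩ := hπ
    constructor
    · rw [Equiv.Perm.mul_apply, h1, hρ0]
    · rw [Equiv.Perm.mul_apply, h2, hρ1]
  · intro π _
    simp [← mul_assoc]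
  · intro π _
    simp [← mul_assoc]

private lemma offDiag_sum_nonneg {m : ℕ} {i₀ i₁ : Fin m} (h01 : i₀ ≠ i₁)
    (F : Fin m → Fin m → ℝ)
    (hF : 0 ≤ ∑ π : Equiv.Perm (Fin m), F (π i₀) (π i₁)) :
    0 ≤ ∑ p ∈ Finset.univ.offDiag, F p.1 p.2 := by
  classical
  have hmaps : ∀ π ∈ (Finset.univ : Finset (Equiv.Perm (Fin m))),
      (π i₀, π i₁) ∈ (Finset.univ : Finset (Fin m)).offDiag := by
    intro π _
    simp only [Finset.mem_offDiag, Finset.mem_univ, true_and]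
    exact fun h => h01 (π.injective h)
  rw [← Finset.sum_fiberwise_of_maps_to hmaps (fun π => F (π i₀) (π i₁))] at hF
  set c := (Finset.univ.filter fun π : Equiv.Perm (Fin m) => (π i₀, π i₁) = (i₀, i₁)).card
    with hc
  have hcpos : 0 < c := by
    rw [hc]
    exact Finset.card_pos.mpr ⟨1, by simp⟩
  have hrw : ∀ p ∈ (Finset.univ : Finset (Fin m)).offDiag,
      (∑ π ∈ Finset.univ.filter fun π : Equiv.Perm (Fin m) => (π i₀, π i₁) = p,
        F (π i₀) (π i₁)) = c • F p.1 p.2 := by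
    intro p hp
    have h1 : ∀ π ∈ Finset.univ.filter fun π : Equiv.Perm (Fin m) => (π i₀, π i₁) = p,
        F (π i₀) (π i₁) = F p.1 p.2 := by
      intro π hπ
      have := (Finset.mem_filter.mp hπ).2
      rw [← this]
    rw [Finset.sum_congr rfl h1, Finset.sum_const]
    congr 1
    have hab : p.1 ≠ p.2 := (Finset.mem_offDiag.mp hp).2.2
    have h2 := fiber_card_const h01 hab
    rw [hc]
    exact h2
  rw [Finset.sum_congr rfl hrw] at hF
  rw [← Finset.smul_sum] at hF
  have hcpos' : (0:ℝ) < (c : ℝ) := by exact_mod_cast hcpos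
  rw [nsmul_eq_mul] at hF
  by_contra hcon
  push_neg at hcon
  nlinarith [mul_pos hcpos' (neg_pos.mpr hcon)]


private lemma mod_fiber_card_le {t k : ℕ} (hk : 0 < k) (j : ℕ) :
    ((Finset.univ : Finset (Fin t)).filter fun i : Fin t => (i : ℕ) % k = j).card
      ≤ (t - 1 - j) / k + 1 := by
  classical
  calc ((Finset.univ : Finset (Fin t)).filter fun i : Fin t => (i : ℕ) % k = j).card
      ≤ (Finset.range ((t - 1 - j) / k + 1)).card := by
        refine Finset.card_le_card_of_injOn (fun i => (i : ℕ) / k) ?_ ?_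
        · intro i hi
          simp only [Finset.mem_coe, Finset.mem_filter, Finset.mem_univ, true_and] at hi
          have key : k * ((i : ℕ) / k) + j = (i : ℕ) := by
            conv_rhs => rw [← Nat.div_add_mod (i : ℕ) k]
            rw [hi]
          simp only [Finset.mem_coe, Finset.mem_range, Nat.lt_succ_iff]
          rw [Nat.le_div_iff_mul_le hk, mul_comm]
          have h5 : k * ((i : ℕ) / k) + j ≤ t - 1 := by
            rw [key]
            have := i.isLt
            omega
          exact Nat.le_sub_of_add_le h5
        · intro i1 h1 i2 h2 hdiv
          simp only [Finset.mem_coe, Finset.mem_filter, Finset.mem_univ, true_and] at h1 h2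
          have k1 : k * ((i1 : ℕ) / k) + j = (i1 : ℕ) := by
            conv_rhs => rw [← Nat.div_add_mod (i1 : ℕ) k]; rw [h1]
          have k2 : k * ((i2 : ℕ) / k) + j = (i2 : ℕ) := by
            conv_rhs => rw [← Nat.div_add_mod (i2 : ℕ) k]; rw [h2]
          apply Fin.ext
          rw [← k1, ← k2]
          simp only at hdiv
          rw [hdiv]
    _ = (t - 1 - j) / k + 1 := Finset.card_range _

-- main counting inequality
private lemma count_bound {t k : ℕ} (hk2 : 2 ≤ k) (hkt : k < t)
    (g : Fin t → Fin k) (hg : ∀ i, (g i : ℕ) = (i : ℕ) % k) :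
    k * ((Finset.univ.offDiag.filter fun p : Fin t × Fin t => g p.1 = g p.2).card)
      < (Finset.univ : Finset (Fin t)).offDiag.card := by
  classical
  have hk : 0 < k := by omega
  set m : Fin k → ℕ := fun j => ((Finset.univ : Finset (Fin t)).filter fun i => g i = j).card
    with hm
  have hsum : ∑ j : Fin k, m j = t := by
    rw [← Finset.card_eq_sum_card_fiberwise (fun i _ => Finset.mem_univ (g i))]
    simp
  have hmle : ∀ j : Fin k, m j ≤ (t - 1 - (j : ℕ)) / k + 1 := by
    intro j
    show ((Finset.univ : Finset (Fin t)).filter fun i => g i = j).card ≤ _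
    have heq : ((Finset.univ : Finset (Fin t)).filter fun i => g i = j)
        = ((Finset.univ : Finset (Fin t)).filter fun i : Fin t => (i : ℕ) % k = (j : ℕ)) := by
      apply Finset.filter_congr
      intro i _
      rw [Fin.ext_iff, hg]
    rw [heq]
    exact mod_fiber_card_le hk _
  -- D decomposition
  have hD : (Finset.univ.offDiag.filter fun p : Fin t × Fin t => g p.1 = g p.2).card
      = ∑ j : Fin k, (m j * m j - m j) := by
    rw [Finset.card_eq_sum_card_fiberwise
      (f := fun p : Fin t × Fin t => g p.1) (t := Finset.univ) (fun p _ => Finset.mem_univ _)]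
    apply Finset.sum_congr rfl
    intro j _
    have heq : ((Finset.univ.offDiag.filter fun p : Fin t × Fin t => g p.1 = g p.2).filter
          fun p => g p.1 = j)
        = ((Finset.univ : Finset (Fin t)).filter fun i => g i = j).offDiag := by
      ext ⟨p1, p2⟩
      simp only [Finset.mem_filter, Finset.mem_offDiag, Finset.mem_univ, true_and]
      constructor
      · rintro ⟨⟨hne, hgeq⟩, hj⟩
        exact ⟨hj, by rw [← hgeq]; exact hj, hne⟩
      · rintro ⟨h1, h2, hne⟩
        exact ⟨⟨hne, by rw [h1, h2]⟩, h1⟩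
    rw [heq, Finset.offDiag_card]
  have hDles : ∀ j : Fin k, m j ≤ m j * m j := by
    intro j
    rcases Nat.eq_zero_or_pos (m j) with h | h
    · simp [h]
    · exact Nat.le_mul_of_pos_left _ h
  set q := (t - 1) / k with hqdef
  have ht3 : 3 ≤ t := by omega
  have hq1 : 1 ≤ q := (Nat.one_le_div_iff hk).mpr (by omega)
  have hmq : ∀ j : Fin k, m j ≤ q + 1 := by
    intro j
    refine (hmle j).trans ?_
    have := Nat.div_le_div_right (c := k) (Nat.sub_le (t - 1) (j : ℕ))
    omega
  rw [hD, Finset.offDiag_card, Finset.card_univ, Fintype.card_fin]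
  set DD := ∑ j : Fin k, (m j * m j - m j) with hDD
  set S2 := ∑ j : Fin k, m j * m j with hS2
  have hDt : DD + t = S2 := by
    rw [hDD, hS2, ← hsum, ← Finset.sum_add_distrib]
    exact Finset.sum_congr rfl fun j _ => Nat.sub_add_cancel (hDles j)
  have htt : t ≤ t * t := Nat.le_mul_of_pos_left t (by omega)
  by_cases h1 : (t - 1) % k = 0
  · -- ρ = 1 case
    have hkq : k * q = t - 1 := by
      rw [mul_comm]
      exact Nat.div_mul_cancel (Nat.dvd_of_mod_eq_zero h1)
    set j₀ : Fin k := ⟨0, hk⟩ with hj₀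
    have hj : ∀ j : Fin k, j ≠ j₀ → m j ≤ q := by
      intro j hjne
      have hjv : 1 ≤ (j : ℕ) := by
        rcases Nat.eq_zero_or_pos (j : ℕ) with h | h
        · exact absurd (Fin.ext h) hjne
        · exact h
      refine (hmle j).trans ?_
      have h2 : t - 1 - (j : ℕ) = k * (q - 1) + (k - (j : ℕ)) := by
        have e1 : k * (q - 1) + k = k * q := by
          rw [← Nat.mul_succ]
          congr 1
          omega
        have hjk := j.isLt
        zify [hq1, hjv, Nat.le_of_lt hjk, show (1:ℕ) ≤ t by omega,
          show (j:ℕ) ≤ t - 1 by omega] at e1 hkq ⊢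
        linarith
      rw [h2, Nat.mul_add_div hk, Nat.div_eq_of_lt (by omega)]
      omega
    have hm0t : m j₀ ≤ t := by
      rw [← hsum]
      exact Finset.single_le_sum (fun _ _ => Nat.zero_le _) (Finset.mem_univ j₀)
    have herase : ∑ j ∈ Finset.univ.erase j₀, m j + m j₀ = t := by
      rw [← hsum]
      exact Finset.sum_erase_add _ _ (Finset.mem_univ j₀)
    have hsplit : S2 ≤ (q + 1) * m j₀ + q * (t - m j₀) := by
      have e1 : ∑ j ∈ Finset.univ.erase j₀, m j * m j + m j₀ * m j₀ = S2 :=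
        Finset.sum_erase_add _ _ (Finset.mem_univ j₀)
      have e2 : ∑ j ∈ Finset.univ.erase j₀, m j * m j
          ≤ ∑ j ∈ Finset.univ.erase j₀, q * m j := by
        refine Finset.sum_le_sum fun j hj' => ?_
        exact Nat.mul_le_mul_right _ (hj j (Finset.ne_of_mem_erase hj'))
      have e3 : ∑ j ∈ Finset.univ.erase j₀, q * m j = q * (t - m j₀) := by
        rw [← Finset.mul_sum]
        congr 1
        omega
      have e4 : m j₀ * m j₀ ≤ (q + 1) * m j₀ := Nat.mul_le_mul_right _ (hmq j₀)
      omega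
    -- final integer arithmetic
    have hm0q := hmq j₀
    zify [hm0t, htt, show (1:ℕ) ≤ t by omega] at hsplit hDt hkq ⊢
    have f0 : (0:ℤ) ≤ (k:ℤ) := by positivity
    have hsplit2 : (S2 : ℤ) ≤ (m j₀ : ℤ) + (q : ℤ) * t := by nlinarith
    have f1 : (k:ℤ) * (S2:ℤ) ≤ (k:ℤ) * ((m j₀ : ℤ) + (q:ℤ) * t) :=
      mul_le_mul_of_nonneg_left hsplit2 f0
    have f2 : (k:ℤ) * (m j₀ : ℤ) ≤ (k:ℤ) * ((q:ℤ) + 1) := by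
      have : ((m j₀ : ℤ)) ≤ (q:ℤ) + 1 := by exact_mod_cast hm0q
      exact mul_le_mul_of_nonneg_left this f0
    have e5 : (k:ℤ) * ((q:ℤ) * t) = ((t:ℤ) - 1) * t := by
      rw [← mul_assoc, hkq]
    have f4 : (2:ℤ) ≤ ((k:ℤ) - 1) * ((t:ℤ) - 1) := by
      have h2k : (2:ℤ) ≤ (k:ℤ) := by exact_mod_cast hk2
      have h2t : (3:ℤ) ≤ (t:ℤ) := by exact_mod_cast ht3
      nlinarith
    have f3 : (k:ℤ) * (DD:ℤ) + (k:ℤ) * (t:ℤ) = (k:ℤ) * (S2:ℤ) := by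
      rw [← mul_add, hDt]
    rw [mul_add, e5] at f1
    rw [mul_add, mul_one, hkq] at f2
    linarith [f1, f2, f3, f4]
  · -- ρ ≠ 1 case
    have hkq2 : k * q ≤ t - 2 := by
      have hdm := Nat.div_add_mod (t - 1) k
      have hr1 : 1 ≤ (t - 1) % k := Nat.one_le_iff_ne_zero.mpr h1
      rw [← hqdef] at hdm
      set A := k * q with hA
      omega
    have hsplit : S2 ≤ (q + 1) * t := by
      rw [hS2]
      calc ∑ j : Fin k, m j * m j ≤ ∑ j : Fin k, (q + 1) * m j :=
            Finset.sum_le_sum fun j _ => Nat.mul_le_mul_right _ (hmq j)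
        _ = (q + 1) * t := by rw [← Finset.mul_sum, hsum]
    zify [htt, show (2:ℕ) ≤ t by omega] at hsplit hDt hkq2 ⊢
    have f0 : (0:ℤ) ≤ (k:ℤ) := by positivity
    have f1 : (k:ℤ) * (S2:ℤ) ≤ (k:ℤ) * (((q:ℤ) + 1) * t) :=
      mul_le_mul_of_nonneg_left hsplit f0
    have f2 : ((k:ℤ) * (q:ℤ)) * (t:ℤ) ≤ ((t:ℤ) - 2) * t := by
      have ht0 : (0:ℤ) ≤ (t:ℤ) := by positivity
      exact mul_le_mul_of_nonneg_right hkq2 ht0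
    have f3 : (k:ℤ) * (DD:ℤ) + (k:ℤ) * (t:ℤ) = (k:ℤ) * (S2:ℤ) := by
      rw [← mul_add, hDt]
    have e6 : (k:ℤ) * (((q:ℤ) + 1) * t) = ((k:ℤ) * (q:ℤ)) * (t:ℤ) + (k:ℤ) * (t:ℤ) := by ring
    rw [e6] at f1
    have ht3z : (3:ℤ) ≤ (t:ℤ) := by exact_mod_cast ht3
    linarith [f1, f2, f3, ht3z]


private lemma feasible_bound {n r : ℕ} {l : ℝ} {K : ↥(Sphere n) → ↥(Sphere n) → ℝ}
    (hC : memCr r K) (hdiag : ∀ v, K v v = l - 1)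
    (hedge : ∀ u v : ↥(Sphere n),
      ⟪(u : EuclideanSpace ℝ (Fin n)), (v : EuclideanSpace ℝ (Fin n))⟫ ≤ 1 / 2 → K u v = -1)
    {k : ℕ} (x : Fin k → ↥(Sphere n)) (hinj : Function.Injective x)
    (hind : ∀ i j : Fin k, i ≠ j →
      ⟪(x i : EuclideanSpace ℝ (Fin n)), (x j : EuclideanSpace ℝ (Fin n))⟫ ≤ 1 / 2)
    (f : Fin (2 + r) → Fin k) :
    (((Finset.univ : Finset (Fin (2 + r))).offDiag.card : ℝ))
      ≤ l * (((Finset.univ.offDiag.filter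
          fun p : Fin (2 + r) × Fin (2 + r) => f p.1 = f p.2).card : ℝ)) := by
  classical
  obtain ⟨-, N, hN0, heq⟩ := hC
  set v : Fin (2 + r) → ↥(Sphere n) := fun i => x (f i) with hv
  have h01 : (Fin.castAdd r (0 : Fin 2)) ≠ (Fin.castAdd r (1 : Fin 2)) := by
    simp [Fin.ext_iff]
  have h2 := congrFun heq v
  simp only [tsym] at h2
  have hfact : (0:ℝ) < ((((2+r).factorial : ℕ)) : ℝ)⁻¹ := by positivity
  have hrhs : 0 ≤ ((((2+r).factorial : ℕ)):ℝ)⁻¹ * ∑ π : Equiv.Perm (Fin (2+r)), N (v ∘ π) :=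
    mul_nonneg (le_of_lt hfact) (Finset.sum_nonneg fun π _ => hN0 _)
  rw [← h2] at hrhs
  have hstk : ∀ π : Equiv.Perm (Fin (2+r)),
      stk 2 r (kerTensor K) (v ∘ π)
        = K (v (π (Fin.castAdd r (0 : Fin 2)))) (v (π (Fin.castAdd r (1 : Fin 2)))) :=
    fun π => rfl
  simp only [hstk] at hrhs
  have h1 : 0 ≤ ∑ π : Equiv.Perm (Fin (2+r)),
      K (v (π (Fin.castAdd r (0 : Fin 2)))) (v (π (Fin.castAdd r (1 : Fin 2)))) := by
    by_contra hcon
    push_neg at hcon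
    nlinarith [mul_pos hfact (neg_pos.mpr hcon)]
  have h3 := offDiag_sum_nonneg h01 (fun a b => K (v a) (v b)) h1
  have hsplitsum := Finset.sum_filter_add_sum_filter_not
      (Finset.univ : Finset (Fin (2+r))).offDiag
      (fun p => f p.1 = f p.2) (fun p => K (v p.1) (v p.2))
  have hAsum : ∑ p ∈ Finset.univ.offDiag.filter
      (fun p : Fin (2+r) × Fin (2+r) => f p.1 = f p.2), K (v p.1) (v p.2)
      = ((Finset.univ.offDiag.filter
          fun p : Fin (2+r) × Fin (2+r) => f p.1 = f p.2).card : ℝ) * (l - 1) := by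
    have hcongr : ∀ p ∈ Finset.univ.offDiag.filter
        (fun p : Fin (2+r) × Fin (2+r) => f p.1 = f p.2), K (v p.1) (v p.2) = l - 1 := by
      intro p hp
      have hfp := (Finset.mem_filter.mp hp).2
      have hv2 : v p.1 = v p.2 := congrArg x hfp
      rw [← hv2]
      exact hdiag _
    rw [Finset.sum_congr rfl hcongr, Finset.sum_const, nsmul_eq_mul]
  have hBsum : ∑ p ∈ Finset.univ.offDiag.filter
      (fun p : Fin (2+r) × Fin (2+r) => ¬ f p.1 = f p.2), K (v p.1) (v p.2)
      = ((Finset.univ.offDiag.filter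
          fun p : Fin (2+r) × Fin (2+r) => ¬ f p.1 = f p.2).card : ℝ) * (-1) := by
    have hcongr : ∀ p ∈ Finset.univ.offDiag.filter
        (fun p : Fin (2+r) × Fin (2+r) => ¬ f p.1 = f p.2), K (v p.1) (v p.2) = -1 := by
      intro p hp
      have hfp := (Finset.mem_filter.mp hp).2
      exact hedge _ _ (hind _ _ hfp)
    rw [Finset.sum_congr rfl hcongr, Finset.sum_const, nsmul_eq_mul]
  have hcards := Finset.card_filter_add_card_filter_not
      (s := (Finset.univ : Finset (Fin (2+r))).offDiag)
      (p := fun p : Fin (2+r) × Fin (2+r) => f p.1 = f p.2)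
  rw [← hsplitsum, hAsum, hBsum] at h3
  have hcards' : ((Finset.univ.offDiag.filter
        fun p : Fin (2+r) × Fin (2+r) => f p.1 = f p.2).card : ℝ)
      + ((Finset.univ.offDiag.filter
        fun p : Fin (2+r) × Fin (2+r) => ¬ f p.1 = f p.2).card : ℝ)
      = (((Finset.univ : Finset (Fin (2+r))).offDiag.card : ℝ)) := by
    exact_mod_cast congrArg (Nat.cast : ℕ → ℝ) hcards
  linarith

private lemma two_mem_indep (n : ℕ) (hn : 2 ≤ n) :
    ∃ X : Finset ↥(Sphere n),
      (∀ u ∈ X, ∀ v ∈ X, u ≠ v →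
        ⟪(u : EuclideanSpace ℝ (Fin n)), (v : EuclideanSpace ℝ (Fin n))⟫ ≤ 1 / 2) ∧
      X.card = 2 := by
  classical
  have hn0 : 0 < n := by omega
  set e : EuclideanSpace ℝ (Fin n) := EuclideanSpace.single ⟨0, hn0⟩ (1:ℝ) with he
  have hnorm : ‖e‖ = 1 := by rw [he, EuclideanSpace.norm_single]; norm_num
  have hmem : e ∈ Sphere n := by
    simp only [Sphere, mem_sphere_zero_iff_norm]
    exact hnorm
  have hmem' : -e ∈ Sphere n := by
    simp only [Sphere, mem_sphere_zero_iff_norm, norm_neg]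
    exact hnorm
  set u : ↥(Sphere n) := ⟨e, hmem⟩ with hu
  set w : ↥(Sphere n) := ⟨-e, hmem'⟩ with hw
  have hne : u ≠ w := by
    intro h
    have h2 : e = -e := congrArg Subtype.val h
    have h4 : (2:ℝ) • e = 0 := by
      rw [two_smul]
      nth_rewrite 2 [h2]
      simp
    have h5 : e = 0 := by
      rcases smul_eq_zero.mp h4 with h | h
      · norm_num at h
      · exact h
    rw [h5] at hnorm
    simp at hnorm
  have hinner : ⟪e, (-e : EuclideanSpace ℝ (Fin n))⟫ = -1 := by
    rw [inner_neg_right, real_inner_self_eq_norm_sq, hnorm]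
    norm_num
  have hinner' : ⟪(-e : EuclideanSpace ℝ (Fin n)), e⟫ = -1 := by
    rw [inner_neg_left, real_inner_self_eq_norm_sq, hnorm]
    norm_num
  refine ⟨{u, w}, ?_, Finset.card_pair hne⟩
  intro a ha b hb hab
  simp only [Finset.mem_insert, Finset.mem_singleton] at ha hb
  rcases ha with ha | ha <;> rcases hb with hb | hb
  · exact absurd (ha.trans hb.symm) hab
  · subst ha; subst hb
    show ⟪e, -e⟫ ≤ 1 / 2
    rw [hinner]; norm_num
  · subst ha; subst hb
    show ⟪-e, e⟫ ≤ 1 / 2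
    rw [hinner']; norm_num
  · exact absurd (ha.trans hb.symm) hab

end Aux

/-- `γ_r(G_n) > κ_n` strictly in `ℝ ∪ {+∞}`. -/
theorem stmt13 (n : ℕ) (hn : 2 ≤ n) (r : ℕ) :
    ((kissingNumber n : ℝ) : EReal) < gammaSph n r := by
  classical
  by_cases hbig : ∃ X : Finset ↥(Sphere n),
      (∀ u ∈ X, ∀ v ∈ X, u ≠ v →
        ⟪(u : EuclideanSpace ℝ (Fin n)), (v : EuclideanSpace ℝ (Fin n))⟫ ≤ 1 / 2) ∧
      2 + r ≤ X.card
  · -- the program is infeasible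
    obtain ⟨X, hXind, hXcard⟩ := hbig
    have hg : gammaSph n r = ⊤ := by
      unfold gammaSph
      convert sInf_empty
      · exact rfl
      rw [Set.eq_empty_iff_forall_notMem]
      rintro x ⟨l, rfl, K, hC, hdiag, hedge⟩
      obtain ⟨Y, hYX, hYcard⟩ := Finset.exists_subset_card_eq hXcard
      set x0 : Fin (2 + r) → ↥(Sphere n) :=
        fun i => ((Y.equivFin.symm (Fin.cast hYcard.symm i)) : {a // a ∈ Y}).1 with hx0
      have hinj : Function.Injective x0 := by
        intro i j hij
        exact Fin.cast_injective _
          (Y.equivFin.symm.injective (Subtype.val_injective hij))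
      have hind : ∀ i j : Fin (2 + r), i ≠ j →
          ⟪(x0 i : EuclideanSpace ℝ (Fin n)), (x0 j : EuclideanSpace ℝ (Fin n))⟫ ≤ 1 / 2 := by
        intro i j hij
        exact hXind _ (hYX (Y.equivFin.symm (Fin.cast hYcard.symm i)).2)
          _ (hYX (Y.equivFin.symm (Fin.cast hYcard.symm j)).2) (hinj.ne hij)
      have hfb := feasible_bound hC hdiag hedge x0 hinj hind (fun i => i)
      have hfilter : ((Finset.univ : Finset (Fin (2+r))).offDiag.filter
          fun p : Fin (2 + r) × Fin (2 + r) => (fun i => i) p.1 = (fun i => i) p.2) = ∅ := by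
        rw [Finset.filter_eq_empty_iff]
        intro p hp
        exact (Finset.mem_offDiag.mp hp).2.2
      rw [hfilter] at hfb
      simp only [Finset.card_empty, Nat.cast_zero, mul_zero] at hfb
      have hodc : 0 < (Finset.univ : Finset (Fin (2+r))).offDiag.card := by
        rw [Finset.offDiag_card, Finset.card_univ, Fintype.card_fin]
        have h2 : 2 + r < (2 + r) * (2 + r) :=
          (Nat.lt_mul_iff_one_lt_left (by omega)).mpr (by omega)
        omega
      have : (0:ℝ) < ((Finset.univ : Finset (Fin (2+r))).offDiag.card : ℝ) := by
        exact_mod_cast hodc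
      linarith
    rw [hg]
    exact EReal.coe_lt_top _
  · push_neg at hbig
    obtain ⟨X2, hX2ind, hX2card⟩ := two_mem_indep n hn
    have hbdd : BddAbove {k : ℕ | ∃ X : Finset ↥(Sphere n),
        (∀ u ∈ X, ∀ v ∈ X, u ≠ v →
          ⟪(u : EuclideanSpace ℝ (Fin n)), (v : EuclideanSpace ℝ (Fin n))⟫ ≤ 1 / 2) ∧
        X.card = k} := by
      refine ⟨2 + r, ?_⟩
      rintro k' ⟨X, hXind, hXcard⟩
      exact le_of_lt (hXcard ▸ hbig X hXind)
    have h2S : 2 ∈ {k : ℕ | ∃ X : Finset ↥(Sphere n),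
        (∀ u ∈ X, ∀ v ∈ X, u ≠ v →
          ⟪(u : EuclideanSpace ℝ (Fin n)), (v : EuclideanSpace ℝ (Fin n))⟫ ≤ 1 / 2) ∧
        X.card = k} := ⟨X2, hX2ind, hX2card⟩
    have hκmem : kissingNumber n ∈ {k : ℕ | ∃ X : Finset ↥(Sphere n),
        (∀ u ∈ X, ∀ v ∈ X, u ≠ v →
          ⟪(u : EuclideanSpace ℝ (Fin n)), (v : EuclideanSpace ℝ (Fin n))⟫ ≤ 1 / 2) ∧
        X.card = k} := Nat.sSup_mem ⟨2, h2S⟩ hbdd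
    have hκ2 : 2 ≤ kissingNumber n := le_csSup hbdd h2S
    obtain ⟨X, hXind, hXcard⟩ := hκmem
    have hκt : kissingNumber n < 2 + r := hXcard ▸ hbig X hXind
    have hκpos : 0 < kissingNumber n := by omega
    set x0 : Fin (kissingNumber n) → ↥(Sphere n) :=
      fun j => ((X.equivFin.symm (Fin.cast hXcard.symm j)) : {a // a ∈ X}).1 with hx0
    have hinj : Function.Injective x0 := by
      intro i j hij
      exact Fin.cast_injective _
        (X.equivFin.symm.injective (Subtype.val_injective hij))
    have hind : ∀ i j : Fin (kissingNumber n), i ≠ j →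
        ⟪(x0 i : EuclideanSpace ℝ (Fin n)), (x0 j : EuclideanSpace ℝ (Fin n))⟫ ≤ 1 / 2 := by
      intro i j hij
      exact hXind _ (X.equivFin.symm (Fin.cast hXcard.symm i)).2
        _ (X.equivFin.symm (Fin.cast hXcard.symm j)).2 (hinj.ne hij)
    set g : Fin (2 + r) → Fin (kissingNumber n) :=
      fun i => ⟨(i : ℕ) % kissingNumber n, Nat.mod_lt _ hκpos⟩ with hgdef
    have hcount := count_bound hκ2 hκt g (fun i => rfl)
    by_cases hD0 : ((Finset.univ : Finset (Fin (2+r))).offDiag.filter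
        fun p : Fin (2 + r) × Fin (2 + r) => g p.1 = g p.2).card = 0
    · -- infeasible again
      have hg : gammaSph n r = ⊤ := by
        unfold gammaSph
        convert sInf_empty
        · exact rfl
        rw [Set.eq_empty_iff_forall_notMem]
        rintro x ⟨l, rfl, K, hC, hdiag, hedge⟩
        have hfb := feasible_bound hC hdiag hedge x0 hinj hind g
        rw [hD0] at hfb
        simp only [Nat.cast_zero, mul_zero] at hfb
        have hodc : 0 < (Finset.univ : Finset (Fin (2+r))).offDiag.card := by
          rw [Finset.offDiag_card, Finset.card_univ, Fintype.card_fin]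
          have h2 : 2 + r < (2 + r) * (2 + r) :=
            (Nat.lt_mul_iff_one_lt_left (by omega)).mpr (by omega)
          omega
        have : (0:ℝ) < ((Finset.univ : Finset (Fin (2+r))).offDiag.card : ℝ) := by
          exact_mod_cast hodc
        linarith
      rw [hg]
      exact EReal.coe_lt_top _
    · have hDpos : (0:ℝ) < (((Finset.univ : Finset (Fin (2+r))).offDiag.filter
          fun p : Fin (2 + r) × Fin (2 + r) => g p.1 = g p.2).card : ℝ) := by
        have : 0 < ((Finset.univ : Finset (Fin (2+r))).offDiag.filter
            fun p : Fin (2 + r) × Fin (2 + r) => g p.1 = g p.2).card := Nat.pos_of_ne_zero hD0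
        exact_mod_cast this
      set c : ℝ := (((Finset.univ : Finset (Fin (2+r))).offDiag.card : ℝ))
        / (((Finset.univ : Finset (Fin (2+r))).offDiag.filter
            fun p : Fin (2 + r) × Fin (2 + r) => g p.1 = g p.2).card : ℝ) with hc
    -- κ < c
      have hκc : ((kissingNumber n : ℕ) : ℝ) < c := by
        rw [hc, lt_div_iff₀ hDpos]
        exact_mod_cast hcount
      have hle : ∀ x ∈ {x : EReal | ∃ l : ℝ, x = (l : EReal) ∧
          ∃ K : ↥(Sphere n) → ↥(Sphere n) → ℝ, memCr r K ∧
            (∀ v, K v v = l - 1) ∧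
            ∀ u v : ↥(Sphere n),
              ⟪(u : EuclideanSpace ℝ (Fin n)), (v : EuclideanSpace ℝ (Fin n))⟫ ≤ 1 / 2 →
              K u v = -1}, (c : EReal) ≤ x := by
        rintro x ⟨l, rfl, K, hC, hdiag, hedge⟩
        have hfb := feasible_bound hC hdiag hedge x0 hinj hind g
        have hcl : c ≤ l := by
          rw [hc, div_le_iff₀ hDpos]
          linarith
        exact_mod_cast EReal.coe_le_coe_iff.mpr hcl
      calc ((kissingNumber n : ℝ) : EReal) < (c : EReal) := EReal.coe_lt_coe_iff.mpr hκc
        _ ≤ gammaSph n r := le_sInf hle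
end
end

section
/- For every n ≥ 2 and every r ∈ ℕ: if γ_r(G_n) < +∞ (equivalently, if there exist λ ∈ ℝ and a kernel K ∈ C_r^{S^{n-1}} with K(v,v) = λ − 1 for all v ∈ S^{n-1} and K(u,v) = −1 for all u,v with ⟨u,v⟩ ≤ 1/2), then r ≥ κ_n − 1. -/
noncomputable section

open Filter Topology RealInnerProductSpace

/-- if the program defining `γ_r(G_n)` is feasible, then
`r ≥ κ_n - 1`. -/
theorem stmt14 (n : ℕ) (hn : 2 ≤ n) (r : ℕ)
    (hfeas : ∃ (l : ℝ) (K : ↥(Sphere n) → ↥(Sphere n) → ℝ), memCr r K ∧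
      (∀ v, K v v = l - 1) ∧
      ∀ u v : ↥(Sphere n),
        ⟪(u : EuclideanSpace ℝ (Fin n)), (v : EuclideanSpace ℝ (Fin n))⟫ ≤ 1 / 2 →
        K u v = -1) :
    kissingNumber n - 1 ≤ r := by
  obtain ⟨l, K, ⟨hker, N, hN, heq⟩, hdiag, hoff⟩ := hfeas
  have hmain : kissingNumber n ≤ r + 1 := by
    apply csSup_le
    · exact ⟨0, ∅, by simp, by simp⟩
    · rintro k ⟨X, hX, rfl⟩
      by_contra hk
      push_neg at hk
      have hle : 2 + r ≤ X.card := by omega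
      set v : Fin (2 + r) → ↥(Sphere n) :=
        fun i => (X.equivFin.symm (Fin.castLE hle i) : ↥(Sphere n)) with hv
      have hvinj : Function.Injective v := by
        intro i j hij
        have h1 : X.equivFin.symm (Fin.castLE hle i) =
            X.equivFin.symm (Fin.castLE hle j) := Subtype.ext hij
        have h2 := X.equivFin.symm.injective h1
        exact Fin.castLE_injective hle h2
      have hvmem : ∀ i, v i ∈ X := fun i => (X.equivFin.symm (Fin.castLE hle i)).2
      have hKv : ∀ i j, i ≠ j → K (v i) (v j) = -1 := by
        intro i j hij
        exact hoff _ _ (hX _ (hvmem i) _ (hvmem j) (fun h => hij (hvinj h)))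
      have hne : (Fin.castAdd r (0 : Fin 2)) ≠ (Fin.castAdd r (1 : Fin 2)) := by
        simp [Fin.ext_iff]
      have h1 : tsym (2 + r) (stk 2 r (kerTensor K)) v = -1 := by
        simp only [tsym, stk, kerTensor, Function.comp]
        have hterm : ∀ π : Equiv.Perm (Fin (2 + r)),
            K (v (π (Fin.castAdd r 0))) (v (π (Fin.castAdd r 1))) = -1 := by
          intro π
          exact hKv _ _ (fun h => hne (π.injective h))
        rw [Finset.sum_congr rfl (fun π _ => hterm π), Finset.sum_const]
        simp only [Finset.card_univ, Fintype.card_perm, Fintype.card_fin,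
          nsmul_eq_mul, mul_neg_one]
        rw [mul_neg, inv_mul_cancel₀ (by positivity : ((2 + r).factorial : ℝ) ≠ 0)]
      have h2 : 0 ≤ tsym (2 + r) N v := by
        apply mul_nonneg (by positivity)
        exact Finset.sum_nonneg fun π _ => hN _
      rw [heq] at h1
      rw [h1] at h2
      linarith
  omega
end
end
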